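/- arXiv:2105.00621 — 12 statements merged into one kernel-verified Lean document; each statement's English description precedes it below -/
import Mathlib

section
/- Let Γ = (N, γ) be a cooperative game admitting a population monotonic allocation scheme (PMAS). Then for any three distinct players 1, 2, 3 ∈ N, we have 2·γ({1,2,3}) ≥ γ({1,2}) + γ({1,3}) + γ({2,3}). -/
open Finset

/-- A population monotonic allocation scheme (PMAS): `x S i` is the payoff of player `i`
in coalition `S`.  Efficiency holds for every nonempty coalition, and every player's
payoff is monotone under coalition inclusion. -/
def IsPMAS {N : Type*} [DecidableEq N] (γ : Finset N → ℝ)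
    (x : Finset N → N → ℝ) : Prop :=
  (∀ S : Finset N, S.Nonempty → ∑ i ∈ S, x S i = γ S) ∧
  (∀ S T : Finset N, S ⊆ T → ∀ i ∈ S, x S i ≤ x T i)

theorem pmas_triangle_inequality {N : Type*} [Fintype N] [DecidableEq N]
    (γ : Finset N → ℝ) (hγ0 : γ ∅ = 0)
    (hpmas : ∃ x : Finset N → N → ℝ, IsPMAS γ x)
    (i j k : N) (hij : i ≠ j) (hik : i ≠ k) (hjk : j ≠ k) :
    2 * γ {i, j, k} ≥ γ {i, j} + γ {i, k} + γ {j, k} := by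
  obtain ⟨x, heff, hmono⟩ := hpmas
  set T : Finset N := {i, j, k} with hT
  have hiT : i ∈ T := by simp [hT]
  have hjT : j ∈ T := by simp [hT]
  have hkT : k ∈ T := by simp [hT]
  have hsub_ij : ({i, j} : Finset N) ⊆ T := by
    intro a ha; simp [hT] at ha ⊢; tauto
  have hsub_ik : ({i, k} : Finset N) ⊆ T := by
    intro a ha; simp [hT] at ha ⊢; tauto
  have hsub_jk : ({j, k} : Finset N) ⊆ T := by
    intro a ha; simp [hT] at ha ⊢; tauto
  have hγij : γ {i, j} = x {i, j} i + x {i, j} j := by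
    rw [← heff {i, j} ⟨i, by simp⟩, Finset.sum_pair hij]
  have hγik : γ {i, k} = x {i, k} i + x {i, k} k := by
    rw [← heff {i, k} ⟨i, by simp⟩, Finset.sum_pair hik]
  have hγjk : γ {j, k} = x {j, k} j + x {j, k} k := by
    rw [← heff {j, k} ⟨j, by simp⟩, Finset.sum_pair hjk]
  have hγT : γ T = x T i + x T j + x T k := by
    rw [← heff T ⟨i, hiT⟩, hT]
    rw [Finset.sum_insert (by simp [hij, hik]), Finset.sum_pair hjk]
    ring
  have h1 : x {i, j} i ≤ x T i := hmono _ T hsub_ij i (by simp)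
  have h2 : x {i, j} j ≤ x T j := hmono _ T hsub_ij j (by simp)
  have h3 : x {i, k} i ≤ x T i := hmono _ T hsub_ik i (by simp)
  have h4 : x {i, k} k ≤ x T k := hmono _ T hsub_ik k (by simp)
  have h5 : x {j, k} j ≤ x T j := hmono _ T hsub_jk j (by simp)
  have h6 : x {j, k} k ≤ x T k := hmono _ T hsub_jk k (by simp)
  rw [hγij, hγik, hγjk, hγT]
  linarith
end

section
/- Let Γ = (N, γ) be a cooperative game admitting a PMAS. Then for any four distinct players 1, 2, 3, 4 ∈ N, we have γ({1,2,3}) + γ({2,3,4}) ≥ γ({1,2}) + γ({2,3}) + γ({3,4}). -/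
open Finset

theorem pmas_four_player_cover_inequality {N : Type*} [Fintype N] [DecidableEq N]
    (γ : Finset N → ℝ) (hγ0 : γ ∅ = 0)
    (hpmas : ∃ x : Finset N → N → ℝ, IsPMAS γ x)
    (v1 v2 v3 v4 : N)
    (h12 : v1 ≠ v2) (h13 : v1 ≠ v3) (h14 : v1 ≠ v4)
    (h23 : v2 ≠ v3) (h24 : v2 ≠ v4) (h34 : v3 ≠ v4) :
    γ {v1, v2, v3} + γ {v2, v3, v4} ≥ γ {v1, v2} + γ {v2, v3} + γ {v3, v4} := by
  obtain ⟨x, heff, hmono⟩ := hpmas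
  have e123 := heff {v1, v2, v3} ⟨v1, by simp⟩
  have e234 := heff {v2, v3, v4} ⟨v2, by simp⟩
  have e12 := heff {v1, v2} ⟨v1, by simp⟩
  have e23 := heff {v2, v3} ⟨v2, by simp⟩
  have e34 := heff {v3, v4} ⟨v3, by simp⟩
  rw [show ({v1, v2, v3} : Finset N) = insert v1 (insert v2 {v3}) from rfl] at e123
  rw [show ({v2, v3, v4} : Finset N) = insert v2 (insert v3 {v4}) from rfl] at e234
  rw [Finset.sum_insert (by simp [h12, h13]), Finset.sum_insert (by simp [h23]),
    Finset.sum_singleton] at e123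
  rw [Finset.sum_insert (by simp [h23, h24]), Finset.sum_insert (by simp [h34]),
    Finset.sum_singleton] at e234
  rw [show ({v1, v2} : Finset N) = insert v1 {v2} from rfl,
    Finset.sum_insert (by simp [h12]), Finset.sum_singleton] at e12
  rw [show ({v2, v3} : Finset N) = insert v2 {v3} from rfl,
    Finset.sum_insert (by simp [h23]), Finset.sum_singleton] at e23
  rw [show ({v3, v4} : Finset N) = insert v3 {v4} from rfl,
    Finset.sum_insert (by simp [h34]), Finset.sum_singleton] at e34
  have m1 := hmono {v1, v2} {v1, v2, v3} (by intro a; simp; tauto) v1 (by simp)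
  have m2 := hmono {v1, v2} {v1, v2, v3} (by intro a; simp; tauto) v2 (by simp)
  have m3 := hmono {v2, v3} {v1, v2, v3} (by intro a; simp; tauto) v3 (by simp)
  have m4 := hmono {v2, v3} {v2, v3, v4} (by intro a; simp; tauto) v2 (by simp)
  have m5 := hmono {v3, v4} {v2, v3, v4} (by intro a; simp; tauto) v3 (by simp)
  have m6 := hmono {v3, v4} {v2, v3, v4} (by intro a; simp; tauto) v4 (by simp)
  linarith
end

section
/- Let G = (V, E; w) be a graph with strictly positive edge weights, and let Γ_G be the matching game on G. Suppose vertices 1, 2, 3 induce a triangle in G with w_{12} ≤ w_{13} ≤ w_{23}. If Γ_G admits a PMAS, then w_{23} ≥ w_{12} + w_{13}. -/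
open Finset

/-- `M` is a matching of the induced subgraph `G[S]`, given as a finite set of
(ordered representatives of) edges with endpoints in `S`, pairwise vertex-disjoint. -/
def IsMatchingIn {V : Type*} (G : SimpleGraph V) (S : Finset V)
    (M : Finset (V × V)) : Prop :=
  (∀ p ∈ M, G.Adj p.1 p.2 ∧ p.1 ∈ S ∧ p.2 ∈ S) ∧
  (∀ p ∈ M, ∀ q ∈ M, p ≠ q →
    p.1 ≠ q.1 ∧ p.1 ≠ q.2 ∧ p.2 ≠ q.1 ∧ p.2 ≠ q.2)

/-- `r` is the maximum total weight of a matching in the induced subgraph `G[S]`. -/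
def IsMaxMatchingWeight {V : Type*} (G : SimpleGraph V)
    (w : V → V → ℝ) (S : Finset V) (r : ℝ) : Prop :=
  (∃ M : Finset (V × V), IsMatchingIn G S M ∧ ∑ p ∈ M, w p.1 p.2 = r) ∧
  (∀ M : Finset (V × V), IsMatchingIn G S M → ∑ p ∈ M, w p.1 p.2 ≤ r)

/-- A matching in a coalition of at most 3 vertices has at most one edge. -/
lemma matching_card_le_one {V : Type*} [DecidableEq V] (G : SimpleGraph V) (S : Finset V)
    (M : Finset (V × V)) (hM : IsMatchingIn G S M) (hS : S.card ≤ 3) : M.card ≤ 1 := by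
  by_contra h
  push_neg at h
  obtain ⟨p, hp, q, hq, hpq⟩ := Finset.one_lt_card.mp h
  obtain ⟨hadjp, hp1, hp2⟩ := hM.1 p hp
  obtain ⟨hadjq, hq1, hq2⟩ := hM.1 q hq
  obtain ⟨h1, h2, h3, h4⟩ := hM.2 p hp q hq hpq
  have hsub : ({p.1, p.2, q.1, q.2} : Finset V) ⊆ S := by
    intro a ha
    simp only [Finset.mem_insert, Finset.mem_singleton] at ha
    rcases ha with rfl|rfl|rfl|rfl <;> assumption
  have hcard : ({p.1, p.2, q.1, q.2} : Finset V).card = 4 := by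
    rw [Finset.card_insert_of_notMem, Finset.card_insert_of_notMem,
        Finset.card_insert_of_notMem, Finset.card_singleton]
    · simp [hadjq.ne]
    · simp [h3, h4, hadjp.ne]
    · simp [h1, h2, hadjp.ne]
  have := Finset.card_le_card hsub
  omega

lemma sum_le_of_card_le_one {V : Type*} (w : V → V → ℝ) (M : Finset (V × V)) (b : ℝ)
    (hb : 0 ≤ b) (hM : M.card ≤ 1) (hbound : ∀ p ∈ M, w p.1 p.2 ≤ b) :
    ∑ p ∈ M, w p.1 p.2 ≤ b := by
  interval_cases h : M.card
  · rw [Finset.card_eq_zero.mp h]; simpa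
  · obtain ⟨p, hp⟩ := Finset.card_eq_one.mp h
    rw [hp, Finset.sum_singleton]
    exact hbound p (by simp [hp])

/-- K₃-property (Lemma 3.1). -/
theorem matchingGame_K3_property {V : Type*} [Fintype V] [DecidableEq V]
    (G : SimpleGraph V) (w : V → V → ℝ)
    (hsym : ∀ a b : V, w a b = w b a)
    (hpos : ∀ a b : V, G.Adj a b → 0 < w a b)
    (γ : Finset V → ℝ)
    (hγ : ∀ S : Finset V, IsMaxMatchingWeight G w S (γ S))
    (hpmas : ∃ x : Finset V → V → ℝ, IsPMAS γ x)
    (v1 v2 v3 : V)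
    (h12 : G.Adj v1 v2) (h13 : G.Adj v1 v3) (h23 : G.Adj v2 v3)
    (hw1 : w v1 v2 ≤ w v1 v3) (hw2 : w v1 v3 ≤ w v2 v3) :
    w v2 v3 ≥ w v1 v2 + w v1 v3 := by
  obtain ⟨x, heff, hmono⟩ := hpmas
  have hne12 : v1 ≠ v2 := h12.ne
  have hne13 : v1 ≠ v3 := h13.ne
  have hne23 : v2 ≠ v3 := h23.ne
  -- γ of a pair coalition is the edge weight
  have hpair : ∀ a b : V, G.Adj a b → γ {a, b} = w a b := by
    intro a b hab
    have hne : a ≠ b := hab.ne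
    have hge : w a b ≤ γ {a, b} := by
      have := (hγ {a, b}).2 {(a, b)} ⟨by simp [hab], by simp⟩
      simpa using this
    have hle : γ {a, b} ≤ w a b := by
      obtain ⟨M, hM, hsum⟩ := (hγ {a, b}).1
      rw [← hsum]
      refine sum_le_of_card_le_one w M _ (hpos a b hab).le
        (matching_card_le_one G _ M hM (by
          refine le_trans (Finset.card_insert_le _ _) ?_; simp)) ?_
      intro p hp
      obtain ⟨hadj, hp1, hp2⟩ := hM.1 p hp
      simp only [Finset.mem_insert, Finset.mem_singleton] at hp1 hp2
      rcases hp1 with h1|h1 <;> rcases hp2 with h2|h2 <;>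
        first
          | (exact absurd (h1.trans h2.symm) hadj.ne)
          | (rw [h1, h2] <;> linarith [hsym a b])
    linarith
  -- γ of the triangle is w v2 v3
  set T : Finset V := {v1, v2, v3} with hT
  have hcardT : T.card ≤ 3 := le_trans (Finset.card_insert_le _ _)
    (by simpa using Nat.add_le_add_right (Finset.card_insert_le v2 ({v3} : Finset V)) 1)
  have hγT : γ T = w v2 v3 := by
    have hge : w v2 v3 ≤ γ T := by
      have := (hγ T).2 {(v2, v3)} ⟨by simp [h23, hT], by simp⟩
      simpa using this
    have hle : γ T ≤ w v2 v3 := by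
      obtain ⟨M, hM, hsum⟩ := (hγ T).1
      rw [← hsum]
      refine sum_le_of_card_le_one w M _ (hpos v2 v3 h23).le
        (matching_card_le_one G _ M hM hcardT) ?_
      intro p hp
      obtain ⟨hadj, hp1, hp2⟩ := hM.1 p hp
      simp only [hT, Finset.mem_insert, Finset.mem_singleton] at hp1 hp2
      rcases hp1 with h1|h1|h1 <;> rcases hp2 with h2|h2|h2 <;>
        first
          | (exact absurd (h1.trans h2.symm) hadj.ne)
          | (rw [h1, h2] <;> linarith [hsym v1 v2, hsym v1 v3, hsym v2 v3])
    linarith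
  -- PMAS inequalities
  have hsub12 : ({v1, v2} : Finset V) ⊆ T := by intro a; simp only [hT, Finset.mem_insert, Finset.mem_singleton]; tauto
  have hsub13 : ({v1, v3} : Finset V) ⊆ T := by intro a; simp only [hT, Finset.mem_insert, Finset.mem_singleton]; tauto
  have hsub23 : ({v2, v3} : Finset V) ⊆ T := by intro a; simp only [hT, Finset.mem_insert, Finset.mem_singleton]; tauto
  have e12 : x {v1, v2} v1 + x {v1, v2} v2 = w v1 v2 := by
    have := heff {v1, v2} ⟨v1, by simp⟩
    rw [hpair v1 v2 h12] at this
    rwa [Finset.sum_pair hne12] at this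
  have e13 : x {v1, v3} v1 + x {v1, v3} v3 = w v1 v3 := by
    have := heff {v1, v3} ⟨v1, by simp⟩
    rw [hpair v1 v3 h13] at this
    rwa [Finset.sum_pair hne13] at this
  have e23 : x {v2, v3} v2 + x {v2, v3} v3 = w v2 v3 := by
    have := heff {v2, v3} ⟨v2, by simp⟩
    rw [hpair v2 v3 h23] at this
    rwa [Finset.sum_pair hne23] at this
  have eT : x T v1 + x T v2 + x T v3 = w v2 v3 := by
    have := heff T ⟨v1, by simp [hT]⟩
    rw [hγT] at this
    rw [← this, hT, Finset.sum_insert (by simp [hne12, hne13]),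
        Finset.sum_insert (by simp [hne23]), Finset.sum_singleton]
    ring
  have m1 := hmono {v1, v2} T hsub12 v1 (by simp)
  have m2 := hmono {v1, v2} T hsub12 v2 (by simp)
  have m3 := hmono {v1, v3} T hsub13 v1 (by simp)
  have m4 := hmono {v1, v3} T hsub13 v3 (by simp)
  have m5 := hmono {v2, v3} T hsub23 v2 (by simp)
  have m6 := hmono {v2, v3} T hsub23 v3 (by simp)
  linarith
end

section
/- Let G = (V, E; w) be a graph with strictly positive edge weights whose matching game Γ_G admits a PMAS. Suppose vertices 1, 2, 3, 4 are distinct, the induced subgraph on {1,2,3} has edge set exactly {12, 23}, and the induced subgraph on {2,3,4} has edge set exactly {23, 34}. Then w_{23} ≥ w_{12} + w_{34}. -/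
open Finset

lemma pair_lower_bound {V : Type*} [DecidableEq V] (G : SimpleGraph V) (w : V → V → ℝ)
    {a b : V} (hab : G.Adj a b) (S : Finset V) (ha : a ∈ S) (hb : b ∈ S)
    (r : ℝ) (h : IsMaxMatchingWeight G w S r) : w a b ≤ r := by
  have := h.2 {(a, b)} ⟨by simp [hab, ha, hb], by
    intro p hp q hq hne
    simp only [Finset.mem_singleton] at hp hq
    exact absurd (hp.trans hq.symm) hne⟩
  simpa using this

lemma P3_matching_bound {V : Type*} [DecidableEq V] (G : SimpleGraph V) (w : V → V → ℝ)
    (hsym : ∀ a b : V, w a b = w b a)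
    {a b c : V} (hwab : 0 ≤ w a b) (hnac : ¬ G.Adj a c)
    (M : Finset (V × V)) (hM : IsMatchingIn G {a, b, c} M) :
    ∑ p ∈ M, w p.1 p.2 ≤ max (w a b) (w b c) := by
  obtain ⟨h1, h2⟩ := hM
  have hnca : ¬ G.Adj c a := fun h => hnac h.symm
  have hclass : ∀ p ∈ M, p = (a, b) ∨ p = (b, a) ∨ p = (b, c) ∨ p = (c, b) := by
    intro p hp
    obtain ⟨hadj, hp1, hp2⟩ := h1 p hp
    simp only [Finset.mem_insert, Finset.mem_singleton] at hp1 hp2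
    obtain ⟨x, y⟩ := p
    simp only at hadj hp1 hp2
    simp only [Prod.mk.injEq]
    rcases hp1 with h | h | h <;> rcases hp2 with h' | h' | h' <;> subst h <;> subst h' <;>
      first
        | tauto
        | exact absurd hadj (G.irrefl)
        | exact absurd hadj hnac
        | exact absurd hadj hnca
  rcases M.eq_empty_or_nonempty with hMe | ⟨p, hp⟩
  · rw [hMe, Finset.sum_empty]
    exact le_max_of_le_left hwab
  · have hMp : M = {p} := by
      apply Finset.eq_singleton_iff_unique_mem.mpr
      refine ⟨hp, fun q hq => ?_⟩
      by_contra hne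
      have hd := h2 q hq p hp hne
      have hbq : q.1 = b ∨ q.2 = b := by
        rcases hclass q hq with rfl | rfl | rfl | rfl <;> simp
      have hbp : p.1 = b ∨ p.2 = b := by
        rcases hclass p hp with rfl | rfl | rfl | rfl <;> simp
      rcases hbq with h | h <;> rcases hbp with h' | h'
      · exact hd.1 (h.trans h'.symm)
      · exact hd.2.1 (h.trans h'.symm)
      · exact hd.2.2.1 (h.trans h'.symm)
      · exact hd.2.2.2 (h.trans h'.symm)
    rw [hMp, Finset.sum_singleton]
    rcases hclass p hp with rfl | rfl | rfl | rfl
    · exact le_max_left _ _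
    · simpa [hsym b a] using le_max_left (w a b) (w b c)
    · exact le_max_right _ _
    · simpa [hsym c b] using le_max_right (w a b) (w b c)

/-- 2P₃-cover (Lemma 3.2 (i)). -/
theorem matchingGame_two_P3_cover {V : Type*} [Fintype V] [DecidableEq V]
    (G : SimpleGraph V) (w : V → V → ℝ)
    (hsym : ∀ a b : V, w a b = w b a)
    (hpos : ∀ a b : V, G.Adj a b → 0 < w a b)
    (γ : Finset V → ℝ)
    (hγ : ∀ S : Finset V, IsMaxMatchingWeight G w S (γ S))
    (hpmas : ∃ x : Finset V → V → ℝ, IsPMAS γ x)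
    (v1 v2 v3 v4 : V)
    (hne12 : v1 ≠ v2) (hne13 : v1 ≠ v3) (hne14 : v1 ≠ v4)
    (hne23 : v2 ≠ v3) (hne24 : v2 ≠ v4) (hne34 : v3 ≠ v4)
    (h12 : G.Adj v1 v2) (h23 : G.Adj v2 v3) (hn13 : ¬ G.Adj v1 v3)
    (h34 : G.Adj v3 v4) (hn24 : ¬ G.Adj v2 v4) :
    w v2 v3 ≥ w v1 v2 + w v3 v4 := by
  obtain ⟨x, heff, hmono⟩ := hpmas
  have hgT1 : γ {v1, v2, v3} ≤ max (w v1 v2) (w v2 v3) := by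
    obtain ⟨M, hM, hMs⟩ := (hγ {v1, v2, v3}).1
    exact hMs ▸ P3_matching_bound G w hsym (hpos _ _ h12).le hn13 M hM
  have hgT2 : γ {v2, v3, v4} ≤ max (w v2 v3) (w v3 v4) := by
    obtain ⟨M, hM, hMs⟩ := (hγ {v2, v3, v4}).1
    exact hMs ▸ P3_matching_bound G w hsym (hpos _ _ h23).le hn24 M hM
  have hgP12 : w v1 v2 ≤ γ {v1, v2} :=
    pair_lower_bound G w h12 _ (by simp) (by simp) _ (hγ {v1, v2})
  have hgP23 : w v2 v3 ≤ γ {v2, v3} :=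
    pair_lower_bound G w h23 _ (by simp) (by simp) _ (hγ {v2, v3})
  have hgP34 : w v3 v4 ≤ γ {v3, v4} :=
    pair_lower_bound G w h34 _ (by simp) (by simp) _ (hγ {v3, v4})
  have eT1 : x {v1, v2, v3} v1 + x {v1, v2, v3} v2 + x {v1, v2, v3} v3 = γ {v1, v2, v3} := by
    have h := heff {v1, v2, v3} ⟨v1, by simp⟩
    rw [Finset.sum_insert (by simp [hne12, hne13]),
      Finset.sum_insert (by simp [hne23]), Finset.sum_singleton] at h
    linarith
  have eT2 : x {v2, v3, v4} v2 + x {v2, v3, v4} v3 + x {v2, v3, v4} v4 = γ {v2, v3, v4} := by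
    have h := heff {v2, v3, v4} ⟨v2, by simp⟩
    rw [Finset.sum_insert (by simp [hne23, hne24]),
      Finset.sum_insert (by simp [hne34]), Finset.sum_singleton] at h
    linarith
  have eP12 : x {v1, v2} v1 + x {v1, v2} v2 = γ {v1, v2} := by
    have h := heff {v1, v2} ⟨v1, by simp⟩
    rw [Finset.sum_insert (by simp [hne12]), Finset.sum_singleton] at h
    linarith
  have eP23 : x {v2, v3} v2 + x {v2, v3} v3 = γ {v2, v3} := by
    have h := heff {v2, v3} ⟨v2, by simp⟩
    rw [Finset.sum_insert (by simp [hne23]), Finset.sum_singleton] at h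
    linarith
  have eP34 : x {v3, v4} v3 + x {v3, v4} v4 = γ {v3, v4} := by
    have h := heff {v3, v4} ⟨v3, by simp⟩
    rw [Finset.sum_insert (by simp [hne34]), Finset.sum_singleton] at h
    linarith
  have hsub1 : ({v1, v2} : Finset V) ⊆ {v1, v2, v3} := by
    intro i hi; simp at hi ⊢; tauto
  have hsub2 : ({v3, v4} : Finset V) ⊆ {v2, v3, v4} := by
    intro i hi; simp at hi ⊢; tauto
  have hsub3 : ({v2, v3} : Finset V) ⊆ {v1, v2, v3} := by
    intro i hi; simp at hi ⊢; tauto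
  have hsub4 : ({v2, v3} : Finset V) ⊆ {v2, v3, v4} := by
    intro i hi; simp at hi ⊢; tauto
  have m1 : x {v1, v2} v1 ≤ x {v1, v2, v3} v1 := hmono _ _ hsub1 v1 (by simp)
  have m2 : x {v1, v2} v2 ≤ x {v1, v2, v3} v2 := hmono _ _ hsub1 v2 (by simp)
  have m3 : x {v3, v4} v3 ≤ x {v2, v3, v4} v3 := hmono _ _ hsub2 v3 (by simp)
  have m4 : x {v3, v4} v4 ≤ x {v2, v3, v4} v4 := hmono _ _ hsub2 v4 (by simp)
  have m5 : x {v2, v3} v3 ≤ x {v1, v2, v3} v3 := hmono _ _ hsub3 v3 (by simp)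
  have m6 : x {v2, v3} v2 ≤ x {v2, v3, v4} v2 := hmono _ _ hsub4 v2 (by simp)
  have key : w v2 v3 + w v1 v2 + w v3 v4 ≤
      max (w v1 v2) (w v2 v3) + max (w v2 v3) (w v3 v4) := by
    linarith
  have pw12 := hpos _ _ h12
  have pw23 := hpos _ _ h23
  have pw34 := hpos _ _ h34
  rcases le_total (w v1 v2) (w v2 v3) with h | h <;>
    rcases le_total (w v3 v4) (w v2 v3) with h' | h'
  · rw [max_eq_right h, max_eq_left h'] at key; linarith
  · rw [max_eq_right h, max_eq_right h'] at key; linarith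
  · rw [max_eq_left h, max_eq_left h'] at key; linarith
  · rw [max_eq_left h, max_eq_right h'] at key; linarith
end

section
/- Let G = (V, E; w) be a graph with strictly positive edge weights whose matching game Γ_G admits a PMAS. Suppose vertices 1, 2, 3, 4 are distinct, the induced subgraph on {1,2,3} has edge set exactly {12, 23}, the induced subgraph on {2,3,4} has edge set exactly {23, 24, 34}, and w_{23} ≥ w_{24}. Then w_{23} ≥ w_{12} + w_{34} and w_{23} ≥ w_{24} + w_{34}. -/
open Finset

lemma le_matching_weight {V : Type*} {G : SimpleGraph V} {w : V → V → ℝ}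
    {S : Finset V} {r : ℝ} (h : IsMaxMatchingWeight G w S r)
    {a b : V} (hab : G.Adj a b) (ha : a ∈ S) (hb : b ∈ S) : w a b ≤ r := by
  have := h.2 {(a, b)} ⟨by simp [hab, ha, hb], by simp⟩
  simpa using this

lemma zero_le_gamma {V : Type*} {G : SimpleGraph V} {w : V → V → ℝ}
    {S : Finset V} {r : ℝ} (h : IsMaxMatchingWeight G w S r) : 0 ≤ r := by
  simpa using h.2 ∅ ⟨by simp, by simp⟩

lemma matching_sum_le {V : Type*} [DecidableEq V] {G : SimpleGraph V}
    {w : V → V → ℝ} {a b c : V} {S : Finset V} {r B : ℝ}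
    (hS : S ⊆ {a, b, c}) (h : IsMaxMatchingWeight G w S r)
    (hB : 0 ≤ B)
    (hbound : ∀ p : V × V, G.Adj p.1 p.2 → p.1 ∈ S → p.2 ∈ S → w p.1 p.2 ≤ B) :
    r ≤ B := by
  obtain ⟨M, hM, hsum⟩ := h.1
  rw [← hsum]
  have huniq : ∀ p ∈ M, ∀ q ∈ M, p = q := by
    intro p hp q hq
    by_contra hne
    obtain ⟨d1, d2, d3, d4⟩ := hM.2 p hp q hq hne
    obtain ⟨hadjp, hp1, hp2⟩ := hM.1 p hp
    obtain ⟨hadjq, hq1, hq2⟩ := hM.1 q hq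
    have e1 : p.1 ≠ p.2 := hadjp.ne
    have e2 : q.1 ≠ q.2 := hadjq.ne
    have hsub : ({p.1, p.2, q.1, q.2} : Finset V) ⊆ {a, b, c} := by
      intro x hx
      simp only [mem_insert, mem_singleton] at hx
      rcases hx with rfl | rfl | rfl | rfl
      exacts [hS hp1, hS hp2, hS hq1, hS hq2]
    have hc4 : ({p.1, p.2, q.1, q.2} : Finset V).card = 4 := by
      rw [card_insert_of_notMem (by simp [e1, d1, d2]),
        card_insert_of_notMem (by simp [d3, d4]),
        card_insert_of_notMem (by simp [e2]), card_singleton]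
    have h4 := card_le_card hsub
    have h3 : ({a, b, c} : Finset V).card ≤ 3 := by
      calc ({a, b, c} : Finset V).card ≤ ({b, c} : Finset V).card + 1 :=
            card_insert_le _ _
        _ ≤ (({c} : Finset V).card + 1) + 1 := by
            exact Nat.add_le_add_right (card_insert_le _ _) 1
        _ = 3 := by simp
    rw [hc4] at h4
    omega
  rcases M.eq_empty_or_nonempty with rfl | ⟨p, hp⟩
  · simpa using hB
  · have hMp : M = {p} := eq_singleton_iff_unique_mem.mpr ⟨hp, fun q hq => huniq q hq p hp⟩
    rw [hMp, sum_singleton]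
    obtain ⟨hadj, h1, h2⟩ := hM.1 p hp
    exact hbound p hadj h1 h2

/-- (P₃,K₃)-cover (Lemma 3.2 (ii)). -/
theorem matchingGame_P3_K3_cover {V : Type*} [Fintype V] [DecidableEq V]
    (G : SimpleGraph V) (w : V → V → ℝ)
    (hsym : ∀ a b : V, w a b = w b a)
    (hpos : ∀ a b : V, G.Adj a b → 0 < w a b)
    (γ : Finset V → ℝ)
    (hγ : ∀ S : Finset V, IsMaxMatchingWeight G w S (γ S))
    (hpmas : ∃ x : Finset V → V → ℝ, IsPMAS γ x)
    (v1 v2 v3 v4 : V)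
    (hne12 : v1 ≠ v2) (hne13 : v1 ≠ v3) (hne14 : v1 ≠ v4)
    (hne23 : v2 ≠ v3) (hne24 : v2 ≠ v4) (hne34 : v3 ≠ v4)
    (h12 : G.Adj v1 v2) (h23 : G.Adj v2 v3) (hn13 : ¬ G.Adj v1 v3)
    (h24 : G.Adj v2 v4) (h34 : G.Adj v3 v4)
    (hw : w v2 v3 ≥ w v2 v4) :
    w v2 v3 ≥ w v1 v2 + w v3 v4 ∧ w v2 v3 ≥ w v2 v4 + w v3 v4 := by
  obtain ⟨x, heff, hmono⟩ := hpmas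
  have wp12 := hpos _ _ h12
  have wp23 := hpos _ _ h23
  have wp24 := hpos _ _ h24
  have wp34 := hpos _ _ h34
  -- γ value facts
  have hγP_ge : w v2 v3 ≤ γ {v2, v3} :=
    le_matching_weight (hγ _) h23 (by simp) (by simp)
  have hγP_le : γ {v2, v3} ≤ w v2 v3 := by
    apply matching_sum_le (a := v2) (b := v3) (c := v3)
      (by intro y hy; simp at hy ⊢; tauto) (hγ _) wp23.le
    intro p hadj h1 h2
    simp only [mem_insert, mem_singleton] at h1 h2
    rcases h1 with h1 | h1 <;> rcases h2 with h2 | h2 <;> rw [h1, h2] at hadj ⊢ <;>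
      first
        | exact absurd hadj G.irrefl
        | exact le_rfl
        | exact (hsym v3 v2).le
  have hγ1_le : γ {v1, v2, v3} ≤ max (w v1 v2) (w v2 v3) := by
    apply matching_sum_le (a := v1) (b := v2) (c := v3) (Finset.Subset.refl _) (hγ _)
      (le_max_of_le_left wp12.le)
    intro p hadj h1 h2
    simp only [mem_insert, mem_singleton] at h1 h2
    rcases h1 with h1 | h1 | h1 <;> rcases h2 with h2 | h2 | h2 <;>
        rw [h1, h2] at hadj ⊢ <;>
      first
        | exact absurd hadj G.irrefl
        | exact absurd hadj hn13
        | exact absurd hadj.symm hn13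
        | simp [hsym v2 v1, hsym v3 v2, le_max_iff, le_refl]
  have hγ2_le : γ {v2, v3, v4} ≤ max (w v2 v3) (max (w v2 v4) (w v3 v4)) := by
    apply matching_sum_le (a := v2) (b := v3) (c := v4) (Finset.Subset.refl _) (hγ _)
      (le_max_of_le_left wp23.le)
    intro p hadj h1 h2
    simp only [mem_insert, mem_singleton] at h1 h2
    rcases h1 with h1 | h1 | h1 <;> rcases h2 with h2 | h2 | h2 <;>
        rw [h1, h2] at hadj ⊢ <;>
      first
        | exact absurd hadj G.irrefl
        | simp [hsym v3 v2, hsym v4 v2, hsym v4 v3, le_max_iff, le_refl]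
  have h12_le : w v1 v2 ≤ γ {v1, v2} :=
    le_matching_weight (hγ _) h12 (by simp) (by simp)
  have h34_le : w v3 v4 ≤ γ {v3, v4} :=
    le_matching_weight (hγ _) h34 (by simp) (by simp)
  have h24_le : w v2 v4 ≤ γ {v2, v4} :=
    le_matching_weight (hγ _) h24 (by simp) (by simp)
  have hγs2 : 0 ≤ γ {v2} := zero_le_gamma (hγ _)
  have hγs3 : 0 ≤ γ {v3} := zero_le_gamma (hγ _)
  -- PMAS facts
  have e_P : x {v2, v3} v2 + x {v2, v3} v3 = γ {v2, v3} := by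
    have := heff {v2, v3} ⟨v2, by simp⟩
    rwa [Finset.sum_pair hne23] at this
  have e_s2 : x {v2} v2 = γ {v2} := by simpa using heff {v2} ⟨v2, by simp⟩
  have e_s3 : x {v3} v3 = γ {v3} := by simpa using heff {v3} ⟨v3, by simp⟩
  have c2_nn : 0 ≤ x {v2, v3} v2 := by
    have := hmono {v2} {v2, v3} (by intro y hy; simp at hy; simp [hy]) v2 (by simp)
    linarith [hγs2, e_s2]
  have c3_nn : 0 ≤ x {v2, v3} v3 := by
    have := hmono {v3} {v2, v3} (by intro y hy; simp at hy; simp [hy]) v3 (by simp)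
    linarith [hγs3, e_s3]
  have e_S1 : x {v1, v2, v3} v1 + (x {v1, v2, v3} v2 + x {v1, v2, v3} v3)
      = γ {v1, v2, v3} := by
    have := heff {v1, v2, v3} ⟨v1, by simp⟩
    rwa [Finset.sum_insert (by simp [hne12, hne13]), Finset.sum_pair hne23] at this
  have e_S2 : x {v2, v3, v4} v2 + (x {v2, v3, v4} v3 + x {v2, v3, v4} v4)
      = γ {v2, v3, v4} := by
    have := heff {v2, v3, v4} ⟨v2, by simp⟩
    rwa [Finset.sum_insert (by simp [hne23, hne24]), Finset.sum_pair hne34] at this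
  have e_12 : x {v1, v2} v1 + x {v1, v2} v2 = γ {v1, v2} := by
    have := heff {v1, v2} ⟨v1, by simp⟩
    rwa [Finset.sum_pair hne12] at this
  have e_34 : x {v3, v4} v3 + x {v3, v4} v4 = γ {v3, v4} := by
    have := heff {v3, v4} ⟨v3, by simp⟩
    rwa [Finset.sum_pair hne34] at this
  have e_24 : x {v2, v4} v2 + x {v2, v4} v4 = γ {v2, v4} := by
    have := heff {v2, v4} ⟨v2, by simp⟩
    rwa [Finset.sum_pair hne24] at this
  have sub1 : ({v1, v2} : Finset V) ⊆ {v1, v2, v3} := by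
    intro y hy; simp at hy ⊢; tauto
  have subP1 : ({v2, v3} : Finset V) ⊆ {v1, v2, v3} := by
    intro y hy; simp at hy ⊢; tauto
  have subP2 : ({v2, v3} : Finset V) ⊆ {v2, v3, v4} := by
    intro y hy; simp at hy ⊢; tauto
  have sub34 : ({v3, v4} : Finset V) ⊆ {v2, v3, v4} := by
    intro y hy; simp at hy ⊢; tauto
  have sub24 : ({v2, v4} : Finset V) ⊆ {v2, v3, v4} := by
    intro y hy; simp at hy ⊢; tauto
  have m1 : x {v1, v2} v1 ≤ x {v1, v2, v3} v1 := hmono _ _ sub1 v1 (by simp)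
  have m2 : x {v1, v2} v2 ≤ x {v1, v2, v3} v2 := hmono _ _ sub1 v2 (by simp)
  have m3 : x {v2, v3} v3 ≤ x {v1, v2, v3} v3 := hmono _ _ subP1 v3 (by simp)
  have m4 : x {v2, v3} v2 ≤ x {v2, v3, v4} v2 := hmono _ _ subP2 v2 (by simp)
  have m5 : x {v2, v3} v3 ≤ x {v2, v3, v4} v3 := hmono _ _ subP2 v3 (by simp)
  have m6 : x {v3, v4} v3 ≤ x {v2, v3, v4} v3 := hmono _ _ sub34 v3 (by simp)
  have m7 : x {v3, v4} v4 ≤ x {v2, v3, v4} v4 := hmono _ _ sub34 v4 (by simp)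
  have m8 : x {v2, v4} v2 ≤ x {v2, v3, v4} v2 := hmono _ _ sub24 v2 (by simp)
  have m9 : x {v2, v4} v4 ≤ x {v2, v3, v4} v4 := hmono _ _ sub24 v4 (by simp)
  -- key inequalities
  have key1 : x {v2, v3} v3 ≤ γ {v1, v2, v3} - w v1 v2 := by linarith
  have key2 : x {v2, v3} v2 ≤ γ {v2, v3, v4} - w v3 v4 := by linarith
  have key3 : x {v2, v3} v3 ≤ γ {v2, v3, v4} - w v2 v4 := by linarith
  have keyP : x {v2, v3} v2 + x {v2, v3} v3 = w v2 v3 := by linarith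
  rcases le_max_iff.mp hγ1_le with hg1 | hg1 <;>
    rcases le_max_iff.mp hγ2_le with hg2 | hg2 <;>
      [skip; rcases le_max_iff.mp hg2 with hg2 | hg2; skip;
        rcases le_max_iff.mp hg2 with hg2 | hg2] <;>
    constructor <;> linarith
end

section
/- Let G = (V, E; w) be a graph with strictly positive edge weights whose matching game Γ_G admits a PMAS. Suppose vertices 1, 2, 3, 4 are distinct, the induced subgraph on {1,2,3} has edge set exactly {12, 13, 23}, the induced subgraph on {2,3,4} has edge set exactly {23, 24, 34}, and w_{12} ≥ max{w_{13}, w_{23}}. Then w_{24} ≥ w_{23} + w_{34}. -/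
open Finset

/-- 2K₃-cover (Lemma 3.2 (iii)). -/
theorem matchingGame_two_K3_cover {V : Type*} [Fintype V] [DecidableEq V]
    (G : SimpleGraph V) (w : V → V → ℝ)
    (hsym : ∀ a b : V, w a b = w b a)
    (hpos : ∀ a b : V, G.Adj a b → 0 < w a b)
    (γ : Finset V → ℝ)
    (hγ : ∀ S : Finset V, IsMaxMatchingWeight G w S (γ S))
    (hpmas : ∃ x : Finset V → V → ℝ, IsPMAS γ x)
    (v1 v2 v3 v4 : V)
    (hne12 : v1 ≠ v2) (hne13 : v1 ≠ v3) (hne14 : v1 ≠ v4)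
    (hne23 : v2 ≠ v3) (hne24 : v2 ≠ v4) (hne34 : v3 ≠ v4)
    (h12 : G.Adj v1 v2) (h13 : G.Adj v1 v3) (h23 : G.Adj v2 v3)
    (h24 : G.Adj v2 v4) (h34 : G.Adj v3 v4)
    (hw : w v1 v2 ≥ max (w v1 v3) (w v2 v3)) :
    w v2 v4 ≥ w v2 v3 + w v3 v4 := by
  obtain ⟨x, heff, hmono⟩ := hpmas
  -- lower bound: any single edge in S gives a lower bound on γ S
  have hlow : ∀ (S : Finset V) (a b : V), G.Adj a b → a ∈ S → b ∈ S → w a b ≤ γ S := by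
    intro S a b hab ha hb
    have h := (hγ S).2 {(a, b)} ?_
    · simpa using h
    · refine ⟨?_, ?_⟩
      · intro p hp
        simp only [Finset.mem_singleton] at hp
        subst hp
        exact ⟨hab, ha, hb⟩
      · intro p hp q hq hpq
        simp only [Finset.mem_singleton] at hp hq
        exact absurd (hp.trans hq.symm) hpq
  -- upper bound for triangles
  have htri : ∀ a b c : V,
      γ {a, b, c} ≤ max 0 (max (w a b) (max (w a c) (w b c))) := by
    intro a b c
    obtain ⟨M, ⟨hM1, hM2⟩, hsum⟩ := (hγ {a, b, c}).1
    rcases M.eq_empty_or_nonempty with rfl | ⟨p, hp⟩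
    · simp only [Finset.sum_empty] at hsum
      rw [← hsum]
      exact le_max_left 0 _
    · have hMp : M = {p} := by
        apply Finset.eq_singleton_iff_unique_mem.mpr
        refine ⟨hp, ?_⟩
        intro q hq
        by_contra hqp
        obtain ⟨h1, h2, h3, h4⟩ := hM2 q hq p hp hqp
        obtain ⟨hadjq, hq1, hq2⟩ := hM1 q hq
        obtain ⟨hadjp, hp1, hp2⟩ := hM1 p hp
        have hsub : ({q.1, q.2, p.1, p.2} : Finset V) ⊆ {a, b, c} := by
          intro z hz
          simp only [Finset.mem_insert, Finset.mem_singleton] at hz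
          rcases hz with rfl | rfl | rfl | rfl <;> assumption
        have h4card : ({q.1, q.2, p.1, p.2} : Finset V).card = 4 := by
          rw [Finset.card_insert_of_notMem (by simp [hadjq.ne, h1, h2]),
              Finset.card_insert_of_notMem (by simp [h3, h4]),
              Finset.card_insert_of_notMem (by simp [hadjp.ne]),
              Finset.card_singleton]
        have hle := Finset.card_le_card hsub
        have h3card : ({a, b, c} : Finset V).card ≤ 3 := by
          have ha1 := Finset.card_insert_le a ({b, c} : Finset V)
          have ha2 := Finset.card_insert_le b ({c} : Finset V)
          simp only [Finset.card_singleton] at ha2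
          omega
        omega
      subst hMp
      rw [Finset.sum_singleton] at hsum
      rw [← hsum]
      obtain ⟨hadj, hp1, hp2⟩ := hM1 p hp
      simp only [Finset.mem_insert, Finset.mem_singleton] at hp1 hp2
      rcases hp1 with h | h | h <;> rcases hp2 with h' | h' | h' <;>
        rw [h, h'] at hadj ⊢ <;>
        first
          | exact absurd hadj (by simp)
          | simp [hsym b a, hsym c a, hsym c b, le_max_iff]
  -- efficiency sums
  have hsumS : x {v1, v2, v3} v1 + x {v1, v2, v3} v2 + x {v1, v2, v3} v3
      = γ {v1, v2, v3} := by
    have h := heff {v1, v2, v3} ⟨v1, by simp⟩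
    rw [Finset.sum_insert (by simp [hne12, hne13]),
        Finset.sum_insert (by simp [hne23]), Finset.sum_singleton] at h
    linarith
  have hsumT : x {v2, v3, v4} v2 + x {v2, v3, v4} v3 + x {v2, v3, v4} v4
      = γ {v2, v3, v4} := by
    have h := heff {v2, v3, v4} ⟨v2, by simp⟩
    rw [Finset.sum_insert (by simp [hne23, hne24]),
        Finset.sum_insert (by simp [hne34]), Finset.sum_singleton] at h
    linarith
  have hpair12 : x {v1, v2} v1 + x {v1, v2} v2 = γ {v1, v2} := by
    have h := heff {v1, v2} ⟨v1, by simp⟩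
    rwa [Finset.sum_pair hne12] at h
  have hpair23 : x {v2, v3} v2 + x {v2, v3} v3 = γ {v2, v3} := by
    have h := heff {v2, v3} ⟨v2, by simp⟩
    rwa [Finset.sum_pair hne23] at h
  have hpair34 : x {v3, v4} v3 + x {v3, v4} v4 = γ {v3, v4} := by
    have h := heff {v3, v4} ⟨v3, by simp⟩
    rwa [Finset.sum_pair hne34] at h
  -- lower bounds from single edges
  have hγ12 : w v1 v2 ≤ γ {v1, v2} := hlow _ _ _ h12 (by simp) (by simp)
  have hγ23 : w v2 v3 ≤ γ {v2, v3} := hlow _ _ _ h23 (by simp) (by simp)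
  have hγ34 : w v3 v4 ≤ γ {v3, v4} := hlow _ _ _ h34 (by simp) (by simp)
  -- γ of the first triangle is at most w v1 v2
  have hγS : γ {v1, v2, v3} ≤ w v1 v2 := by
    have hp12 := hpos _ _ h12
    have hA : w v1 v3 ≤ w v1 v2 := le_trans (le_max_left _ _) hw
    have hB : w v2 v3 ≤ w v1 v2 := le_trans (le_max_right _ _) hw
    refine le_trans (htri v1 v2 v3) ?_
    exact max_le (le_of_lt hp12) (max_le le_rfl (max_le hA hB))
  -- monotonicity facts
  have m1 : x {v1, v2} v1 ≤ x {v1, v2, v3} v1 :=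
    hmono _ _ (by intro z hz; simp only [Finset.mem_insert, Finset.mem_singleton] at hz ⊢; tauto)
      v1 (by simp)
  have m2 : x {v1, v2} v2 ≤ x {v1, v2, v3} v2 :=
    hmono _ _ (by intro z hz; simp only [Finset.mem_insert, Finset.mem_singleton] at hz ⊢; tauto)
      v2 (by simp)
  have m3 : x {v2, v3} v3 ≤ x {v1, v2, v3} v3 :=
    hmono _ _ (by intro z hz; simp only [Finset.mem_insert, Finset.mem_singleton] at hz ⊢; tauto)
      v3 (by simp)
  have m4 : x {v2, v3} v2 ≤ x {v2, v3, v4} v2 :=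
    hmono _ _ (by intro z hz; simp only [Finset.mem_insert, Finset.mem_singleton] at hz ⊢; tauto)
      v2 (by simp)
  have m5 : x {v3, v4} v3 ≤ x {v2, v3, v4} v3 :=
    hmono _ _ (by intro z hz; simp only [Finset.mem_insert, Finset.mem_singleton] at hz ⊢; tauto)
      v3 (by simp)
  have m6 : x {v3, v4} v4 ≤ x {v2, v3, v4} v4 :=
    hmono _ _ (by intro z hz; simp only [Finset.mem_insert, Finset.mem_singleton] at hz ⊢; tauto)
      v4 (by simp)
  -- x_{S,3} ≤ 0
  have hx3 : x {v1, v2, v3} v3 ≤ 0 := by linarith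
  -- x_{{2,3},2} ≥ w23
  have hx23 : w v2 v3 ≤ x {v2, v3} v2 := by linarith
  -- γ T ≥ w23 + w34
  have hγT : w v2 v3 + w v3 v4 ≤ γ {v2, v3, v4} := by linarith
  -- conclude
  have htriT := htri v2 v3 v4
  have hp23 := hpos _ _ h23
  have hp34 := hpos _ _ h34
  rcases le_max_iff.mp htriT with h | h
  · linarith
  · rcases le_max_iff.mp h with h | h
    · linarith
    · rcases le_max_iff.mp h with h | h
      · linarith
      · linarith
end

section
/- Let G = (V, E; w) be a graph with strictly positive edge weights whose matching game Γ_G admits a PMAS. If distinct vertices 1, 2, 3, 4 induce a subgraph of G with edge set exactly {12, 23, 34} (an induced path P_4), then w_{23} ≥ w_{12} + w_{34}. -/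
open Finset

section Aux

variable {V : Type*} [DecidableEq V] (G : SimpleGraph V) (w : V → V → ℝ)

/-- Any matching in a two-element coalition `{a, b}` consists of (ordered versions of)
the single edge `ab`. -/
lemma matching_pair_classify {a b : V} {M : Finset (V × V)}
    (hM : IsMatchingIn G {a, b} M) :
    ∀ p ∈ M, p = (a, b) ∨ p = (b, a) := by
  intro p hp
  obtain ⟨p1, p2⟩ := p
  obtain ⟨hadj, hp1, hp2⟩ := hM.1 _ hp
  simp only [Finset.mem_insert, Finset.mem_singleton] at hp1 hp2
  rcases hp1 with h1 | h1 <;> rcases hp2 with h2 | h2 <;>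
      rw [h1, h2] at hadj ⊢ <;>
    first
      | exact absurd rfl hadj.ne
      | simp

lemma matching_sum_pair_le (hsym : ∀ a b : V, w a b = w b a)
    {a b : V} (hab : G.Adj a b) {M : Finset (V × V)}
    (hM : IsMatchingIn G {a, b} M) (hw : 0 < w a b) :
    ∑ p ∈ M, w p.1 p.2 ≤ w a b := by
  rcases M.eq_empty_or_nonempty with hMe | ⟨p, hp⟩
  · rw [hMe, Finset.sum_empty]; exact hw.le
  · have hMp : M = {p} := by
      rw [Finset.eq_singleton_iff_unique_mem]
      refine ⟨hp, fun q hq => ?_⟩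
      by_contra hqp
      have hd := hM.2 q hq p hp hqp
      rcases matching_pair_classify G hM p hp with h | h <;>
        rcases matching_pair_classify G hM q hq with h' | h' <;>
          subst h <;> subst h' <;> simp at hd hqp
    rw [hMp, Finset.sum_singleton]
    rcases matching_pair_classify G hM p hp with h | h <;> rw [h] <;>
      first
        | exact le_of_eq rfl
        | exact le_of_eq (hsym _ _)

/-- In an induced path `a - b - c`, any matching has total weight at most
`max (w a b) (w b c)`. -/
lemma matching_sum_P3_le (hsym : ∀ a b : V, w a b = w b a)
    {a b c : V} (hab : G.Adj a b) (hbc : G.Adj b c)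
    (hnac : ¬ G.Adj a c) {M : Finset (V × V)}
    (hM : IsMatchingIn G {a, b, c} M) (hw : 0 < w a b) :
    ∑ p ∈ M, w p.1 p.2 ≤ max (w a b) (w b c) := by
  have hcl : ∀ p ∈ M, p = (a, b) ∨ p = (b, a) ∨ p = (b, c) ∨ p = (c, b) := by
    intro p hp
    obtain ⟨p1, p2⟩ := p
    obtain ⟨hadj, hp1, hp2⟩ := hM.1 _ hp
    simp only [Finset.mem_insert, Finset.mem_singleton] at hp1 hp2
    rcases hp1 with h1 | h1 | h1 <;> rcases hp2 with h2 | h2 | h2 <;>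
        rw [h1, h2] at hadj ⊢ <;>
      first
        | exact absurd rfl hadj.ne
        | exact absurd hadj hnac
        | exact absurd hadj.symm hnac
        | simp
  rcases M.eq_empty_or_nonempty with hMe | ⟨p, hp⟩
  · rw [hMe, Finset.sum_empty]
    exact le_max_of_le_left hw.le
  · have hMp : M = {p} := by
      rw [Finset.eq_singleton_iff_unique_mem]
      refine ⟨hp, fun q hq => ?_⟩
      by_contra hqp
      have hd := hM.2 q hq p hp hqp
      rcases hcl p hp with h | h | h | h <;>
        rcases hcl q hq with h' | h' | h' | h' <;>
          subst h <;> subst h' <;> simp at hd hqp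
    rw [hMp, Finset.sum_singleton]
    rcases hcl p hp with h | h | h | h <;> rw [h] <;>
      first
        | exact le_max_left _ _
        | exact le_max_right _ _
        | exact le_of_eq_of_le (hsym _ _) (le_max_left _ _)
        | exact le_of_eq_of_le (hsym _ _) (le_max_right _ _)

/-- In an induced path `a - b - c - d`, any matching has total weight at most
`max (w b c) (w a b + w c d)`. -/
lemma matching_sum_P4_le (hsym : ∀ a b : V, w a b = w b a)
    {a b c d : V} (hab : G.Adj a b) (hbc : G.Adj b c) (hcd : G.Adj c d)
    (hnac : ¬ G.Adj a c) (hnad : ¬ G.Adj a d) (hnbd : ¬ G.Adj b d)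
    (hac : a ≠ c) (had : a ≠ d) (hbd : b ≠ d)
    {M : Finset (V × V)}
    (hM : IsMatchingIn G {a, b, c, d} M) (hwab : 0 < w a b) (hwcd : 0 < w c d) :
    ∑ p ∈ M, w p.1 p.2 ≤ max (w b c) (w a b + w c d) := by
  classical
  have hcl : ∀ p ∈ M, p = (a, b) ∨ p = (b, a) ∨ p = (b, c) ∨ p = (c, b) ∨
      p = (c, d) ∨ p = (d, c) := by
    intro p hp
    obtain ⟨p1, p2⟩ := p
    obtain ⟨hadj, hp1, hp2⟩ := hM.1 _ hp
    simp only [Finset.mem_insert, Finset.mem_singleton] at hp1 hp2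
    rcases hp1 with h1 | h1 | h1 | h1 <;> rcases hp2 with h2 | h2 | h2 | h2 <;>
        rw [h1, h2] at hadj ⊢ <;>
      first
        | exact absurd rfl hadj.ne
        | exact absurd hadj hnac
        | exact absurd hadj.symm hnac
        | exact absurd hadj hnad
        | exact absurd hadj.symm hnad
        | exact absurd hadj hnbd
        | exact absurd hadj.symm hnbd
        | simp
  by_cases hbcmem : ∃ p ∈ M, p = (b, c) ∨ p = (c, b)
  · obtain ⟨p, hp, hpbc⟩ := hbcmem
    have hMp : M = {p} := by
      rw [Finset.eq_singleton_iff_unique_mem]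
      refine ⟨hp, fun q hq => ?_⟩
      by_contra hqp
      have hd := hM.2 q hq p hp hqp
      rcases hpbc with h | h <;>
        rcases hcl q hq with h' | h' | h' | h' | h' | h' <;>
          subst h <;> subst h' <;> simp at hd hqp
    rw [hMp, Finset.sum_singleton]
    rcases hpbc with h | h <;> rw [h] <;>
      first
        | exact le_max_left _ _
        | exact le_of_eq_of_le (hsym _ _) (le_max_left _ _)
  · push_neg at hbcmem
    have hcl' : ∀ p ∈ M, (p = (a, b) ∨ p = (b, a)) ∨ (p = (c, d) ∨ p = (d, c)) := by
      intro p hp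
      have := hbcmem p hp
      rcases hcl p hp with h | h | h | h | h | h <;> tauto
    set M1 := M.filter (fun p => p = (a, b) ∨ p = (b, a)) with hM1def
    set M2 := M.filter (fun p => p = (c, d) ∨ p = (d, c)) with hM2def
    have hunion : M = M1 ∪ M2 := by
      ext p
      simp only [hM1def, hM2def, Finset.mem_union, Finset.mem_filter]
      constructor
      · intro hp
        rcases hcl' p hp with h | h
        · exact Or.inl ⟨hp, h⟩
        · exact Or.inr ⟨hp, h⟩
      · rintro (⟨hp, _⟩ | ⟨hp, _⟩) <;> exact hp
    have hdisj : Disjoint M1 M2 := by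
      rw [Finset.disjoint_left]
      intro p hp1 hp2
      simp only [hM1def, hM2def, Finset.mem_filter] at hp1 hp2
      have hbc' : b ≠ c := hbc.ne
      rcases hp1.2 with h | h <;> rcases hp2.2 with h' | h' <;>
        rw [h] at h' <;> simp [Prod.ext_iff] at h' <;> tauto
    have hsub1 : ∀ p ∈ M1, p ∈ M := fun p hp => (Finset.mem_filter.mp hp).1
    have hsub2 : ∀ p ∈ M2, p ∈ M := fun p hp => (Finset.mem_filter.mp hp).1
    have hsum1 : ∑ p ∈ M1, w p.1 p.2 ≤ w a b := by
      rcases M1.eq_empty_or_nonempty with hMe | ⟨p, hp⟩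
      · rw [hMe, Finset.sum_empty]; exact hwab.le
      · have hMp : M1 = {p} := by
          rw [Finset.eq_singleton_iff_unique_mem]
          refine ⟨hp, fun q hq => ?_⟩
          by_contra hqp
          have hd := hM.2 q (hsub1 q hq) p (hsub1 p hp) hqp
          rcases (Finset.mem_filter.mp hp).2 with h | h <;>
            rcases (Finset.mem_filter.mp hq).2 with h' | h' <;>
              subst h <;> subst h' <;> simp at hd hqp
        rw [hMp, Finset.sum_singleton]
        rcases (Finset.mem_filter.mp hp).2 with h | h <;> rw [h] <;>
          first
            | exact le_of_eq rfl
            | exact le_of_eq (hsym _ _)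
    have hsum2 : ∑ p ∈ M2, w p.1 p.2 ≤ w c d := by
      rcases M2.eq_empty_or_nonempty with hMe | ⟨p, hp⟩
      · rw [hMe, Finset.sum_empty]; exact hwcd.le
      · have hMp : M2 = {p} := by
          rw [Finset.eq_singleton_iff_unique_mem]
          refine ⟨hp, fun q hq => ?_⟩
          by_contra hqp
          have hd := hM.2 q (hsub2 q hq) p (hsub2 p hp) hqp
          rcases (Finset.mem_filter.mp hp).2 with h | h <;>
            rcases (Finset.mem_filter.mp hq).2 with h' | h' <;>
              subst h <;> subst h' <;> simp at hd hqp
        rw [hMp, Finset.sum_singleton]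
        rcases (Finset.mem_filter.mp hp).2 with h | h <;> rw [h] <;>
          first
            | exact le_of_eq rfl
            | exact le_of_eq (hsym _ _)
    calc ∑ p ∈ M, w p.1 p.2 = ∑ p ∈ M1, w p.1 p.2 + ∑ p ∈ M2, w p.1 p.2 := by
          rw [hunion, Finset.sum_union hdisj]
      _ ≤ w a b + w c d := add_le_add hsum1 hsum2
      _ ≤ max (w b c) (w a b + w c d) := le_max_right _ _

end Aux

/-- P₄-property (Lemma 3.3). -/
theorem matchingGame_P4_property {V : Type*} [Fintype V] [DecidableEq V]
    (G : SimpleGraph V) (w : V → V → ℝ)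
    (hsym : ∀ a b : V, w a b = w b a)
    (hpos : ∀ a b : V, G.Adj a b → 0 < w a b)
    (γ : Finset V → ℝ)
    (hγ : ∀ S : Finset V, IsMaxMatchingWeight G w S (γ S))
    (hpmas : ∃ x : Finset V → V → ℝ, IsPMAS γ x)
    (v1 v2 v3 v4 : V)
    (hne12 : v1 ≠ v2) (hne13 : v1 ≠ v3) (hne14 : v1 ≠ v4)
    (hne23 : v2 ≠ v3) (hne24 : v2 ≠ v4) (hne34 : v3 ≠ v4)
    (h12 : G.Adj v1 v2) (h23 : G.Adj v2 v3) (h34 : G.Adj v3 v4)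
    (hn13 : ¬ G.Adj v1 v3) (hn14 : ¬ G.Adj v1 v4) (hn24 : ¬ G.Adj v2 v4) :
    w v2 v3 ≥ w v1 v2 + w v3 v4 := by
  classical
  obtain ⟨x, heff, hmono⟩ := hpmas
  have hw12 := hpos v1 v2 h12
  have hw23 := hpos v2 v3 h23
  have hw34 := hpos v3 v4 h34
  -- the value of a singleton coalition is 0
  have hsingle : ∀ i : V, γ {i} = 0 := by
    intro i
    obtain ⟨⟨M, hM, hsum⟩, _⟩ := hγ {i}
    have hMe : M = ∅ := by
      apply Finset.eq_empty_of_forall_notMem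
      intro p hp
      obtain ⟨hadj, hp1, hp2⟩ := hM.1 p hp
      rw [Finset.mem_singleton] at hp1 hp2
      exact hadj.ne (hp1.trans hp2.symm)
    rw [hMe] at hsum
    simpa using hsum.symm
  -- all payoffs are nonnegative
  have hnonneg : ∀ (S : Finset V) (i : V), i ∈ S → 0 ≤ x S i := by
    intro S i hi
    have h1 : x {i} i = γ {i} := by
      simpa using heff {i} ⟨i, Finset.mem_singleton_self i⟩
    have h2 := hmono {i} S (Finset.singleton_subset_iff.mpr hi) i
      (Finset.mem_singleton_self i)
    rw [h1, hsingle] at h2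
    exact h2
  -- the value of an adjacent pair is the weight of the edge
  have hpair : ∀ u v : V, G.Adj u v → γ {u, v} = w u v := by
    intro u v huv
    obtain ⟨⟨M, hM, hsum⟩, hub⟩ := hγ {u, v}
    have hge : w u v ≤ γ {u, v} := by
      have h1 : IsMatchingIn G {u, v} {(u, v)} := by
        constructor
        · intro p hp
          rw [Finset.mem_singleton] at hp
          subst hp
          exact ⟨huv, by simp, by simp⟩
        · intro p hp q hq hpq
          rw [Finset.mem_singleton] at hp hq
          exact absurd (hp.trans hq.symm) hpq
      simpa using hub {(u, v)} h1
    have hle : γ {u, v} ≤ w u v := by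
      rw [← hsum]
      exact matching_sum_pair_le G w hsym huv hM (hpos u v huv)
    linarith
  -- upper bounds on the values of the paths
  have g123 : γ {v1, v2, v3} ≤ max (w v1 v2) (w v2 v3) := by
    obtain ⟨⟨M, hM, hsum⟩, _⟩ := hγ {v1, v2, v3}
    rw [← hsum]
    exact matching_sum_P3_le G w hsym h12 h23 hn13 hM hw12
  have g234 : γ {v2, v3, v4} ≤ max (w v2 v3) (w v3 v4) := by
    obtain ⟨⟨M, hM, hsum⟩, _⟩ := hγ {v2, v3, v4}
    rw [← hsum]
    exact matching_sum_P3_le G w hsym h23 h34 hn24 hM hw23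
  have g1234 : γ {v1, v2, v3, v4} ≤ max (w v2 v3) (w v1 v2 + w v3 v4) := by
    obtain ⟨⟨M, hM, hsum⟩, _⟩ := hγ {v1, v2, v3, v4}
    rw [← hsum]
    exact matching_sum_P4_le G w hsym h12 h23 h34 hn13 hn14 hn24
      hne13 hne14 hne24 hM hw12 hw34
  -- efficiency on the pairs
  have E12 : x {v1, v2} v1 + x {v1, v2} v2 = w v1 v2 := by
    have h := heff {v1, v2} ⟨v1, by simp⟩
    rw [Finset.sum_pair hne12, hpair v1 v2 h12] at h
    exact h
  have E23 : x {v2, v3} v2 + x {v2, v3} v3 = w v2 v3 := by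
    have h := heff {v2, v3} ⟨v2, by simp⟩
    rw [Finset.sum_pair hne23, hpair v2 v3 h23] at h
    exact h
  have E34 : x {v3, v4} v3 + x {v3, v4} v4 = w v3 v4 := by
    have h := heff {v3, v4} ⟨v3, by simp⟩
    rw [Finset.sum_pair hne34, hpair v3 v4 h34] at h
    exact h
  -- efficiency (as upper bounds) on the paths
  have E123 : x {v1, v2, v3} v1 + (x {v1, v2, v3} v2 + x {v1, v2, v3} v3) ≤
      max (w v1 v2) (w v2 v3) := by
    have h := heff {v1, v2, v3} ⟨v1, by simp⟩
    rw [Finset.sum_insert (by simp [hne12, hne13]), Finset.sum_pair hne23] at h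
    linarith
  have E234 : x {v2, v3, v4} v2 + (x {v2, v3, v4} v3 + x {v2, v3, v4} v4) ≤
      max (w v2 v3) (w v3 v4) := by
    have h := heff {v2, v3, v4} ⟨v2, by simp⟩
    rw [Finset.sum_insert (by simp [hne23, hne24]), Finset.sum_pair hne34] at h
    linarith
  have E1234 : x {v1, v2, v3, v4} v1 + (x {v1, v2, v3, v4} v2 +
      (x {v1, v2, v3, v4} v3 + x {v1, v2, v3, v4} v4)) ≤
      max (w v2 v3) (w v1 v2 + w v3 v4) := by
    have h := heff {v1, v2, v3, v4} ⟨v1, by simp⟩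
    rw [Finset.sum_insert (by simp [hne12, hne13, hne14]),
      Finset.sum_insert (by simp [hne23, hne24]), Finset.sum_pair hne34] at h
    linarith
  -- monotonicity facts
  have m1 : x {v1, v2} v1 ≤ x {v1, v2, v3} v1 :=
    hmono _ _ (by simp [Finset.insert_subset_iff]) v1 (by simp)
  have m2 : x {v1, v2} v2 ≤ x {v1, v2, v3} v2 :=
    hmono _ _ (by simp [Finset.insert_subset_iff]) v2 (by simp)
  have m3 : x {v2, v3} v2 ≤ x {v1, v2, v3} v2 :=
    hmono _ _ (by simp [Finset.insert_subset_iff]) v2 (by simp)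
  have m4 : x {v2, v3} v3 ≤ x {v1, v2, v3} v3 :=
    hmono _ _ (by simp [Finset.insert_subset_iff]) v3 (by simp)
  have m5 : x {v2, v3} v2 ≤ x {v2, v3, v4} v2 :=
    hmono _ _ (by simp [Finset.insert_subset_iff]) v2 (by simp)
  have m6 : x {v2, v3} v3 ≤ x {v2, v3, v4} v3 :=
    hmono _ _ (by simp [Finset.insert_subset_iff]) v3 (by simp)
  have m7 : x {v3, v4} v3 ≤ x {v2, v3, v4} v3 :=
    hmono _ _ (by simp [Finset.insert_subset_iff]) v3 (by simp)
  have m8 : x {v3, v4} v4 ≤ x {v2, v3, v4} v4 :=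
    hmono _ _ (by simp [Finset.insert_subset_iff]) v4 (by simp)
  have m9 : x {v1, v2} v1 ≤ x {v1, v2, v3, v4} v1 :=
    hmono _ _ (by simp [Finset.insert_subset_iff]) v1 (by simp)
  have m10 : x {v1, v2} v2 ≤ x {v1, v2, v3, v4} v2 :=
    hmono _ _ (by simp [Finset.insert_subset_iff]) v2 (by simp)
  have m11 : x {v2, v3} v2 ≤ x {v1, v2, v3, v4} v2 :=
    hmono _ _ (by simp [Finset.insert_subset_iff]) v2 (by simp)
  have m12 : x {v2, v3} v3 ≤ x {v1, v2, v3, v4} v3 :=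
    hmono _ _ (by simp [Finset.insert_subset_iff]) v3 (by simp)
  have m13 : x {v3, v4} v3 ≤ x {v1, v2, v3, v4} v3 :=
    hmono _ _ (by simp [Finset.insert_subset_iff]) v3 (by simp)
  have m14 : x {v3, v4} v4 ≤ x {v1, v2, v3, v4} v4 :=
    hmono _ _ (by simp [Finset.insert_subset_iff]) v4 (by simp)
  -- nonnegativity facts
  have n1 : 0 ≤ x {v1, v2} v1 := hnonneg _ _ (by simp)
  have n2 : 0 ≤ x {v1, v2} v2 := hnonneg _ _ (by simp)
  have n3 : 0 ≤ x {v2, v3} v2 := hnonneg _ _ (by simp)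
  have n4 : 0 ≤ x {v2, v3} v3 := hnonneg _ _ (by simp)
  have n5 : 0 ≤ x {v3, v4} v3 := hnonneg _ _ (by simp)
  have n6 : 0 ≤ x {v3, v4} v4 := hnonneg _ _ (by simp)
  -- conclude
  by_contra hcon
  push_neg at hcon
  have hmax : max (w v2 v3) (w v1 v2 + w v3 v4) = w v1 v2 + w v3 v4 :=
    max_eq_right hcon.le
  rw [hmax] at E1234
  rcases le_total (w v1 v2) (w v2 v3) with hm | hm <;>
    rcases le_total (w v2 v3) (w v3 v4) with hm' | hm'
  · rw [max_eq_right hm] at E123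
    rw [max_eq_right hm'] at E234
    linarith
  · rw [max_eq_right hm] at E123
    rw [max_eq_left hm'] at E234
    linarith
  · rw [max_eq_left hm] at E123
    rw [max_eq_right hm'] at E234
    linarith
  · rw [max_eq_left hm] at E123
    rw [max_eq_left hm'] at E234
    linarith
end

section
/- Let G = (V, E; w) be a graph with strictly positive edge weights whose matching game Γ_G admits a PMAS. Suppose distinct vertices 1, 2, 3, 4 induce a paw: the induced subgraph on {1,2,3,4} has edge set exactly {12, 23, 24, 34}, and assume w_{23} ≥ w_{24}. Then w_{23} ≥ w_{12} + w_{34} and w_{23} ≥ w_{24} + w_{34}. -/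
open Finset

/-- Lower bound: any edge inside `S` gives a singleton matching. -/
lemma edge_le_weight {V : Type*} [DecidableEq V] (G : SimpleGraph V) (w : V → V → ℝ)
    {S : Finset V} {r : ℝ} (h : IsMaxMatchingWeight G w S r)
    {a b : V} (hadj : G.Adj a b) (ha : a ∈ S) (hb : b ∈ S) :
    w a b ≤ r := by
  have hm : IsMatchingIn G S {(a, b)} := by
    constructor
    · intro p hp
      simp only [Finset.mem_singleton] at hp
      subst hp
      exact ⟨hadj, ha, hb⟩
    · intro p hp q hq hpq
      simp only [Finset.mem_singleton] at hp hq
      subst hp; subst hq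
      exact absurd rfl hpq
  have := h.2 _ hm
  simpa using this

/-- In a 3-element vertex set, a matching has at most one edge, so its weight is
bounded by any bound on single edges. -/
lemma triple_matching_bound {V : Type*} [DecidableEq V] (G : SimpleGraph V)
    (w : V → V → ℝ) (a b c : V) (M : Finset (V × V))
    (h : IsMatchingIn G ({a, b, c} : Finset V) M) (B : ℝ) (hB : 0 ≤ B)
    (hbound : ∀ p ∈ M, w p.1 p.2 ≤ B) :
    ∑ p ∈ M, w p.1 p.2 ≤ B := by
  rcases Finset.eq_empty_or_nonempty M with rfl | ⟨p, hp⟩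
  · simpa
  have hsingle : M = {p} := by
    apply Finset.eq_singleton_iff_unique_mem.mpr
    refine ⟨hp, fun q hq => ?_⟩
    by_contra hne
    obtain ⟨hd1, hd2, hd3, hd4⟩ := h.2 q hq p hp hne
    obtain ⟨hadjp, hp1, hp2⟩ := h.1 p hp
    obtain ⟨hadjq, hq1, hq2⟩ := h.1 q hq
    have hpne : p.1 ≠ p.2 := hadjp.ne
    have hqne : q.1 ≠ q.2 := hadjq.ne
    simp only [Finset.mem_insert, Finset.mem_singleton] at hp1 hp2 hq1 hq2
    rcases hp1 with h1 | h1 | h1 <;> rcases hp2 with h2 | h2 | h2 <;>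
      rcases hq1 with h3 | h3 | h3 <;> rcases hq2 with h4 | h4 | h4 <;>
      simp_all
  rw [hsingle, Finset.sum_singleton]
  exact hbound p hp

/-- Paw-property (Lemma 3.4). -/
theorem matchingGame_paw_property {V : Type*} [Fintype V] [DecidableEq V]
    (G : SimpleGraph V) (w : V → V → ℝ)
    (hsym : ∀ a b : V, w a b = w b a)
    (hpos : ∀ a b : V, G.Adj a b → 0 < w a b)
    (γ : Finset V → ℝ)
    (hγ : ∀ S : Finset V, IsMaxMatchingWeight G w S (γ S))
    (hpmas : ∃ x : Finset V → V → ℝ, IsPMAS γ x)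
    (v1 v2 v3 v4 : V)
    (hne12 : v1 ≠ v2) (hne13 : v1 ≠ v3) (hne14 : v1 ≠ v4)
    (hne23 : v2 ≠ v3) (hne24 : v2 ≠ v4) (hne34 : v3 ≠ v4)
    (h12 : G.Adj v1 v2) (h23 : G.Adj v2 v3) (h24 : G.Adj v2 v4) (h34 : G.Adj v3 v4)
    (hn13 : ¬ G.Adj v1 v3) (hn14 : ¬ G.Adj v1 v4)
    (hw : w v2 v3 ≥ w v2 v4) :
    w v2 v3 ≥ w v1 v2 + w v3 v4 ∧ w v2 v3 ≥ w v2 v4 + w v3 v4 := by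
  obtain ⟨x, heff, hmono⟩ := hpmas
  -- positivity
  have pw12 : 0 < w v1 v2 := hpos _ _ h12
  have pw23 : 0 < w v2 v3 := hpos _ _ h23
  have pw24 : 0 < w v2 v4 := hpos _ _ h24
  have pw34 : 0 < w v3 v4 := hpos _ _ h34
  -- coalitions
  set S23 : Finset V := {v2, v3} with hS23
  set S12 : Finset V := {v1, v2} with hS12
  set S34 : Finset V := {v3, v4} with hS34
  set S24 : Finset V := {v2, v4} with hS24
  set A : Finset V := {v1, v2, v3} with hA
  set Bc : Finset V := {v2, v3, v4} with hBc
  -- lower bounds on pair values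
  have g23 : w v2 v3 ≤ γ S23 := edge_le_weight G w (hγ S23) h23 (by simp [hS23]) (by simp [hS23])
  have g12 : w v1 v2 ≤ γ S12 := edge_le_weight G w (hγ S12) h12 (by simp [hS12]) (by simp [hS12])
  have g34 : w v3 v4 ≤ γ S34 := edge_le_weight G w (hγ S34) h34 (by simp [hS34]) (by simp [hS34])
  have g24 : w v2 v4 ≤ γ S24 := edge_le_weight G w (hγ S24) h24 (by simp [hS24]) (by simp [hS24])
  -- efficiency sums
  have e23 : x S23 v2 + x S23 v3 = γ S23 := by
    have := heff S23 ⟨v2, by simp [hS23]⟩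
    rwa [hS23, Finset.sum_pair hne23] at this
  have e12 : x S12 v1 + x S12 v2 = γ S12 := by
    have := heff S12 ⟨v1, by simp [hS12]⟩
    rwa [hS12, Finset.sum_pair hne12] at this
  have e34 : x S34 v3 + x S34 v4 = γ S34 := by
    have := heff S34 ⟨v3, by simp [hS34]⟩
    rwa [hS34, Finset.sum_pair hne34] at this
  have e24 : x S24 v2 + x S24 v4 = γ S24 := by
    have := heff S24 ⟨v2, by simp [hS24]⟩
    rwa [hS24, Finset.sum_pair hne24] at this
  have eA : x A v1 + (x A v2 + x A v3) = γ A := by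
    have := heff A ⟨v1, by simp [hA]⟩
    rwa [hA, Finset.sum_insert (by simp [hne12, hne13]), Finset.sum_pair hne23] at this
  have eB : x Bc v2 + (x Bc v3 + x Bc v4) = γ Bc := by
    have := heff Bc ⟨v2, by simp [hBc]⟩
    rwa [hBc, Finset.sum_insert (by simp [hne23, hne24]), Finset.sum_pair hne34] at this
  -- monotonicity
  have sub23A : S23 ⊆ A := by intro i hi; simp only [hS23, hA, Finset.mem_insert, Finset.mem_singleton] at *; tauto
  have sub12A : S12 ⊆ A := by intro i hi; simp only [hS12, hA, Finset.mem_insert, Finset.mem_singleton] at *; tauto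
  have sub23B : S23 ⊆ Bc := by intro i hi; simp only [hS23, hBc, Finset.mem_insert, Finset.mem_singleton] at *; tauto
  have sub34B : S34 ⊆ Bc := by intro i hi; simp only [hS34, hBc, Finset.mem_insert, Finset.mem_singleton] at *; tauto
  have sub24B : S24 ⊆ Bc := by intro i hi; simp only [hS24, hBc, Finset.mem_insert, Finset.mem_singleton] at *; tauto
  have m1 : x S23 v2 ≤ x A v2 := hmono _ _ sub23A v2 (by simp [hS23])
  have m2 : x S23 v3 ≤ x A v3 := hmono _ _ sub23A v3 (by simp [hS23])
  have m3 : x S23 v2 ≤ x Bc v2 := hmono _ _ sub23B v2 (by simp [hS23])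
  have m4 : x S23 v3 ≤ x Bc v3 := hmono _ _ sub23B v3 (by simp [hS23])
  have m5 : x S12 v1 ≤ x A v1 := hmono _ _ sub12A v1 (by simp [hS12])
  have m6 : x S12 v2 ≤ x A v2 := hmono _ _ sub12A v2 (by simp [hS12])
  have m7 : x S34 v3 ≤ x Bc v3 := hmono _ _ sub34B v3 (by simp [hS34])
  have m8 : x S34 v4 ≤ x Bc v4 := hmono _ _ sub34B v4 (by simp [hS34])
  have m9 : x S24 v2 ≤ x Bc v2 := hmono _ _ sub24B v2 (by simp [hS24])
  have m10 : x S24 v4 ≤ x Bc v4 := hmono _ _ sub24B v4 (by simp [hS24])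
  -- upper bound on γ A
  have gA : γ A ≤ max (w v1 v2) (w v2 v3) := by
    obtain ⟨M, hM, hsum⟩ := (hγ A).1
    rw [← hsum]
    refine triple_matching_bound G w v1 v2 v3 M (by rwa [hA] at hM)
      _ (le_max_of_le_left pw12.le) ?_
    intro p hp
    obtain ⟨hadj, hp1, hp2⟩ := hM.1 p hp
    rw [hA] at hp1 hp2
    simp only [Finset.mem_insert, Finset.mem_singleton] at hp1 hp2
    rcases hp1 with h1 | h1 | h1 <;> rcases hp2 with h2 | h2 | h2 <;>
        rw [h1, h2] at hadj ⊢
    · exact absurd hadj (G.irrefl)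
    · exact le_max_left _ _
    · exact absurd hadj hn13
    · rw [hsym v2 v1]; exact le_max_left _ _
    · exact absurd hadj (G.irrefl)
    · exact le_max_right _ _
    · exact absurd (hadj.symm) hn13
    · rw [hsym v3 v2]; exact le_max_right _ _
    · exact absurd hadj (G.irrefl)
  -- upper bound on γ Bc
  have gB : γ Bc ≤ max (w v2 v3) (w v3 v4) := by
    obtain ⟨M, hM, hsum⟩ := (hγ Bc).1
    rw [← hsum]
    refine triple_matching_bound G w v2 v3 v4 M (by rwa [hBc] at hM)
      _ (le_max_of_le_left pw23.le) ?_
    intro p hp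
    obtain ⟨hadj, hp1, hp2⟩ := hM.1 p hp
    rw [hBc] at hp1 hp2
    simp only [Finset.mem_insert, Finset.mem_singleton] at hp1 hp2
    rcases hp1 with h1 | h1 | h1 <;> rcases hp2 with h2 | h2 | h2 <;>
        rw [h1, h2] at hadj ⊢
    · exact absurd hadj (G.irrefl)
    · exact le_max_left _ _
    · exact le_trans hw (le_max_left _ _)
    · rw [hsym v3 v2]; exact le_max_left _ _
    · exact absurd hadj (G.irrefl)
    · exact le_max_right _ _
    · rw [hsym v4 v2]; exact le_trans hw (le_max_left _ _)
    · rw [hsym v4 v3]; exact le_max_right _ _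
    · exact absurd hadj (G.irrefl)
  -- Claim 1: w23 ≥ w12 + w34
  have claim1 : w v2 v3 ≥ w v1 v2 + w v3 v4 := by
    rcases le_total (w v1 v2) (w v2 v3) with hc1 | hc1 <;>
      rcases le_total (w v2 v3) (w v3 v4) with hc2 | hc2 <;>
      [skip; skip; skip; skip] <;>
    · first
      | (rw [max_eq_right hc1] at gA; rw [max_eq_right hc2] at gB; linarith)
      | (rw [max_eq_right hc1] at gA; rw [max_eq_left hc2] at gB; linarith)
      | (rw [max_eq_left hc1] at gA; rw [max_eq_right hc2] at gB; linarith)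
      | (rw [max_eq_left hc1] at gA; rw [max_eq_left hc2] at gB; linarith)
  -- hence w34 ≤ w23
  have h3423 : w v3 v4 ≤ w v2 v3 := by linarith
  rw [max_eq_left h3423] at gB
  exact ⟨claim1, by linarith⟩
end

section
/- Let G = (V, E; w) be a graph with strictly positive edge weights whose matching game Γ_G admits a PMAS. Suppose distinct vertices 1, 2, 3, 4 induce a diamond: the induced subgraph on {1,2,3,4} has edge set exactly {12, 13, 23, 24, 34}. Then w_{23} ≥ w_{12} + w_{13} and w_{23} ≥ w_{24} + w_{34}. -/
open Finset

lemma matching_sum_le_s8 {V : Type*} (G : SimpleGraph V) (w : V → V → ℝ)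
    (S : Finset V) (m : ℝ) (hm : 0 ≤ m)
    (hedge : ∀ a b : V, G.Adj a b → a ∈ S → b ∈ S → w a b ≤ m)
    (hshare : ∀ a b c d : V, G.Adj a b → a ∈ S → b ∈ S → G.Adj c d → c ∈ S → d ∈ S →
      a = c ∨ a = d ∨ b = c ∨ b = d)
    {M : Finset (V × V)} (hM : IsMatchingIn G S M) :
    ∑ p ∈ M, w p.1 p.2 ≤ m := by
  rcases M.eq_empty_or_nonempty with rfl | ⟨p, hp⟩
  · simpa using hm
  · obtain ⟨h1, h2⟩ := hM
    have hMp : M = {p} := by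
      apply Finset.eq_singleton_iff_unique_mem.mpr
      refine ⟨hp, fun q hq => ?_⟩
      by_contra hne
      obtain ⟨hpa, hp1, hp2⟩ := h1 p hp
      obtain ⟨hqa, hq1, hq2⟩ := h1 q hq
      obtain ⟨n1, n2, n3, n4⟩ := h2 q hq p hp hne
      rcases hshare q.1 q.2 p.1 p.2 hqa hq1 hq2 hpa hp1 hp2 with h | h | h | h <;> tauto
    subst hMp
    rw [Finset.sum_singleton]
    obtain ⟨hpa, hp1, hp2⟩ := h1 p hp
    exact hedge _ _ hpa hp1 hp2

lemma gamma_le {V : Type*} (G : SimpleGraph V) (w : V → V → ℝ)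
    (S : Finset V) (r m : ℝ) (h : IsMaxMatchingWeight G w S r) (hm : 0 ≤ m)
    (hedge : ∀ a b : V, G.Adj a b → a ∈ S → b ∈ S → w a b ≤ m)
    (hshare : ∀ a b c d : V, G.Adj a b → a ∈ S → b ∈ S → G.Adj c d → c ∈ S → d ∈ S →
      a = c ∨ a = d ∨ b = c ∨ b = d) : r ≤ m := by
  obtain ⟨⟨M, hM, hsum⟩, _⟩ := h
  rw [← hsum]
  exact matching_sum_le_s8 G w S m hm hedge hshare hM

lemma gamma_ge {V : Type*} (G : SimpleGraph V) (w : V → V → ℝ)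
    (S : Finset V) (r : ℝ) (h : IsMaxMatchingWeight G w S r) (a b : V)
    (hab : G.Adj a b) (ha : a ∈ S) (hb : b ∈ S) : w a b ≤ r := by
  have := h.2 {(a, b)} ⟨by simp [hab, ha, hb], by simp⟩
  simpa using this

lemma gamma_nonneg {V : Type*} (G : SimpleGraph V) (w : V → V → ℝ)
    (S : Finset V) (r : ℝ) (h : IsMaxMatchingWeight G w S r) : 0 ≤ r := by
  have := h.2 ∅ ⟨by simp, by simp⟩
  simpa using this

lemma gamma_single {V : Type*} (G : SimpleGraph V) (w : V → V → ℝ)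
    (v : V) (r : ℝ) (h : IsMaxMatchingWeight G w {v} r) : r = 0 := by
  refine le_antisymm ?_ (gamma_nonneg G w _ r h)
  refine gamma_le G w _ r 0 h le_rfl ?_ ?_
  · intro a b hab ha hb
    simp only [Finset.mem_singleton] at ha hb
    exact absurd (ha.trans hb.symm) hab.ne
  · intro a b c d hab ha hb _ _ _
    simp only [Finset.mem_singleton] at ha hb
    exact absurd (ha.trans hb.symm) hab.ne

lemma gamma_pair {V : Type*} [DecidableEq V] (G : SimpleGraph V) (w : V → V → ℝ)
    (hsym : ∀ a b : V, w a b = w b a) (hpos : ∀ a b : V, G.Adj a b → 0 < w a b)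
    (a b : V) (hab : G.Adj a b) (r : ℝ) (h : IsMaxMatchingWeight G w {a, b} r) :
    r = w a b := by
  refine le_antisymm ?_ (gamma_ge G w _ r h a b hab (by simp) (by simp))
  refine gamma_le G w _ r (w a b) h (hpos a b hab).le ?_ ?_
  · intro c d hcd hc hd
    simp only [Finset.mem_insert, Finset.mem_singleton] at hc hd
    rcases hc with rfl | rfl <;> rcases hd with rfl | rfl
    · exact absurd rfl hcd.ne
    · exact le_rfl
    · exact (hsym c d).le
    · exact absurd rfl hcd.ne
  · intro c d e f hcd hc hd hef he hf
    have h1 := hcd.ne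
    have h2 := hef.ne
    simp only [Finset.mem_insert, Finset.mem_singleton] at hc hd he hf
    rcases hc with rfl | rfl <;> rcases hd with rfl | rfl <;>
      rcases he with rfl | rfl <;> rcases hf with rfl | rfl <;> tauto

lemma gamma_triangle_le {V : Type*} [DecidableEq V] (G : SimpleGraph V) (w : V → V → ℝ)
    (hsym : ∀ a b : V, w a b = w b a) (hpos : ∀ a b : V, G.Adj a b → 0 < w a b)
    (a b c : V) (hab : G.Adj a b) (hac : G.Adj a c) (hbc : G.Adj b c)
    (r : ℝ) (h : IsMaxMatchingWeight G w {a, b, c} r) :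
    r ≤ w a b ∨ r ≤ w a c ∨ r ≤ w b c := by
  set m := max (max (w a b) (w a c)) (w b c) with hm
  have e1 : w a b ≤ m := le_trans (le_max_left _ _) (le_max_left _ _)
  have e2 : w a c ≤ m := le_trans (le_max_right _ _) (le_max_left _ _)
  have e3 : w b c ≤ m := le_max_right _ _
  have e1' : w b a ≤ m := by rw [← hsym]; exact e1
  have e2' : w c a ≤ m := by rw [← hsym]; exact e2
  have e3' : w c b ≤ m := by rw [← hsym]; exact e3
  have hr : r ≤ m := by
    refine gamma_le G w _ r m h (le_trans (hpos a b hab).le e1) ?_ ?_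
    · intro u v huv hu hv
      simp only [Finset.mem_insert, Finset.mem_singleton] at hu hv
      rcases hu with rfl | rfl | rfl <;> rcases hv with rfl | rfl | rfl <;>
        first
        | exact absurd rfl huv.ne
        | assumption
    · intro u v s t huv hu hv hst hs ht
      have h1 := huv.ne
      have h2 := hst.ne
      simp only [Finset.mem_insert, Finset.mem_singleton] at hu hv hs ht
      rcases hu with rfl | rfl | rfl <;> rcases hv with rfl | rfl | rfl <;>
        rcases hs with rfl | rfl | rfl <;> rcases ht with rfl | rfl | rfl <;> tauto
  rcases le_max_iff.mp hr with h' | h'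
  · rcases le_max_iff.mp h' with h'' | h''
    · exact Or.inl h''
    · exact Or.inr (Or.inl h'')
  · exact Or.inr (Or.inr h')

lemma gamma_path_le {V : Type*} [DecidableEq V] (G : SimpleGraph V) (w : V → V → ℝ)
    (hsym : ∀ a b : V, w a b = w b a) (hpos : ∀ a b : V, G.Adj a b → 0 < w a b)
    (a b c : V) (hab : G.Adj a b) (hbc : G.Adj b c) (hac : ¬ G.Adj a c)
    (r : ℝ) (h : IsMaxMatchingWeight G w {a, b, c} r) :
    r ≤ w a b ∨ r ≤ w b c := by
  set m := max (w a b) (w b c) with hm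
  have e1 : w a b ≤ m := le_max_left _ _
  have e3 : w b c ≤ m := le_max_right _ _
  have e1' : w b a ≤ m := by rw [← hsym]; exact e1
  have e3' : w c b ≤ m := by rw [← hsym]; exact e3
  have hca : ¬ G.Adj c a := fun h' => hac h'.symm
  have hr : r ≤ m := by
    refine gamma_le G w _ r m h (le_trans (hpos a b hab).le e1) ?_ ?_
    · intro u v huv hu hv
      simp only [Finset.mem_insert, Finset.mem_singleton] at hu hv
      rcases hu with rfl | rfl | rfl <;> rcases hv with rfl | rfl | rfl <;>
        first
        | exact absurd rfl huv.ne
        | exact absurd huv hac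
        | exact absurd huv hca
        | assumption
    · intro u v s t huv hu hv hst hs ht
      have h1 := huv.ne
      have h2 := hst.ne
      simp only [Finset.mem_insert, Finset.mem_singleton] at hu hv hs ht
      rcases hu with rfl | rfl | rfl <;> rcases hv with rfl | rfl | rfl <;>
        rcases hs with rfl | rfl | rfl <;> rcases ht with rfl | rfl | rfl <;>
        first
        | exact absurd huv hac
        | exact absurd huv hca
        | exact absurd hst hac
        | exact absurd hst hca
        | tauto
  exact le_max_iff.mp hr

lemma pair_eff {V : Type*} [DecidableEq V] (x : Finset V → V → ℝ) (γ : Finset V → ℝ)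
    (heff : ∀ S : Finset V, S.Nonempty → ∑ i ∈ S, x S i = γ S)
    (a b : V) (hab : a ≠ b) :
    x {a, b} a + x {a, b} b = γ {a, b} := by
  have h := heff {a, b} ⟨a, by simp⟩
  rwa [Finset.sum_insert (by simp [hab]), Finset.sum_singleton] at h

lemma triple_eff {V : Type*} [DecidableEq V] (x : Finset V → V → ℝ) (γ : Finset V → ℝ)
    (heff : ∀ S : Finset V, S.Nonempty → ∑ i ∈ S, x S i = γ S)
    (a b c : V) (hab : a ≠ b) (hac : a ≠ c) (hbc : b ≠ c) :
    x {a, b, c} a + x {a, b, c} b + x {a, b, c} c = γ {a, b, c} := by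
  have h := heff {a, b, c} ⟨a, by simp⟩
  rw [Finset.sum_insert (by simp [hab, hac]), Finset.sum_insert (by simp [hbc]),
    Finset.sum_singleton] at h
  linarith

set_option maxHeartbeats 1000000 in
/-- Diamond-property (Lemma 3.5). -/
theorem matchingGame_diamond_property {V : Type*} [Fintype V] [DecidableEq V]
    (G : SimpleGraph V) (w : V → V → ℝ)
    (hsym : ∀ a b : V, w a b = w b a)
    (hpos : ∀ a b : V, G.Adj a b → 0 < w a b)
    (γ : Finset V → ℝ)
    (hγ : ∀ S : Finset V, IsMaxMatchingWeight G w S (γ S))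
    (hpmas : ∃ x : Finset V → V → ℝ, IsPMAS γ x)
    (v1 v2 v3 v4 : V)
    (hne12 : v1 ≠ v2) (hne13 : v1 ≠ v3) (hne14 : v1 ≠ v4)
    (hne23 : v2 ≠ v3) (hne24 : v2 ≠ v4) (hne34 : v3 ≠ v4)
    (h12 : G.Adj v1 v2) (h13 : G.Adj v1 v3) (h23 : G.Adj v2 v3)
    (h24 : G.Adj v2 v4) (h34 : G.Adj v3 v4)
    (hn14 : ¬ G.Adj v1 v4) :
    w v2 v3 ≥ w v1 v2 + w v1 v3 ∧ w v2 v3 ≥ w v2 v4 + w v3 v4 := by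
  obtain ⟨x, heff, hmono⟩ := hpmas
  -- positivity of weights
  have hw12 := hpos _ _ h12
  have hw13 := hpos _ _ h13
  have hw23 := hpos _ _ h23
  have hw24 := hpos _ _ h24
  have hw34 := hpos _ _ h34
  -- nonnegativity of allocations
  have hx0 : ∀ (S : Finset V) (v : V), v ∈ S → 0 ≤ x S v := by
    intro S v hv
    have h1 := heff {v} ⟨v, Finset.mem_singleton_self v⟩
    rw [Finset.sum_singleton, gamma_single G w v (γ {v}) (hγ {v})] at h1
    have h2 := hmono {v} S (Finset.singleton_subset_iff.mpr hv) v (Finset.mem_singleton_self v)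
    linarith
  -- pair efficiency
  have hp12 : x {v1, v2} v1 + x {v1, v2} v2 = w v1 v2 := by
    rw [pair_eff x γ heff v1 v2 hne12, gamma_pair G w hsym hpos v1 v2 h12 _ (hγ _)]
  have hp13 : x {v1, v3} v1 + x {v1, v3} v3 = w v1 v3 := by
    rw [pair_eff x γ heff v1 v3 hne13, gamma_pair G w hsym hpos v1 v3 h13 _ (hγ _)]
  have hp23 : x {v2, v3} v2 + x {v2, v3} v3 = w v2 v3 := by
    rw [pair_eff x γ heff v2 v3 hne23, gamma_pair G w hsym hpos v2 v3 h23 _ (hγ _)]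
  have hp24 : x {v2, v4} v2 + x {v2, v4} v4 = w v2 v4 := by
    rw [pair_eff x γ heff v2 v4 hne24, gamma_pair G w hsym hpos v2 v4 h24 _ (hγ _)]
  have hp34 : x {v3, v4} v3 + x {v3, v4} v4 = w v3 v4 := by
    rw [pair_eff x γ heff v3 v4 hne34, gamma_pair G w hsym hpos v3 v4 h34 _ (hγ _)]
  -- triple efficiency
  have hb : x {v1, v2, v3} v1 + x {v1, v2, v3} v2 + x {v1, v2, v3} v3 = γ {v1, v2, v3} :=
    triple_eff x γ heff v1 v2 v3 hne12 hne13 hne23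
  have hc : x {v2, v3, v4} v2 + x {v2, v3, v4} v3 + x {v2, v3, v4} v4 = γ {v2, v3, v4} :=
    triple_eff x γ heff v2 v3 v4 hne23 hne24 hne34
  have hd : x {v1, v2, v4} v1 + x {v1, v2, v4} v2 + x {v1, v2, v4} v4 = γ {v1, v2, v4} :=
    triple_eff x γ heff v1 v2 v4 hne12 hne14 hne24
  have he : x {v1, v3, v4} v1 + x {v1, v3, v4} v3 + x {v1, v3, v4} v4 = γ {v1, v3, v4} :=
    triple_eff x γ heff v1 v3 v4 hne13 hne14 hne34
  -- gamma bounds on triples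
  have hT1 : γ {v1, v2, v3} ≤ w v1 v2 ∨ γ {v1, v2, v3} ≤ w v1 v3 ∨ γ {v1, v2, v3} ≤ w v2 v3 :=
    gamma_triangle_le G w hsym hpos v1 v2 v3 h12 h13 h23 _ (hγ _)
  have hT2 : γ {v2, v3, v4} ≤ w v2 v3 ∨ γ {v2, v3, v4} ≤ w v2 v4 ∨ γ {v2, v3, v4} ≤ w v3 v4 :=
    gamma_triangle_le G w hsym hpos v2 v3 v4 h23 h24 h34 _ (hγ _)
  have hPd : γ {v1, v2, v4} ≤ w v1 v2 ∨ γ {v1, v2, v4} ≤ w v2 v4 :=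
    gamma_path_le G w hsym hpos v1 v2 v4 h12 h24 hn14 _ (hγ _)
  have hPe : γ {v1, v3, v4} ≤ w v1 v3 ∨ γ {v1, v3, v4} ≤ w v3 v4 :=
    gamma_path_le G w hsym hpos v1 v3 v4 h13 h34 hn14 _ (hγ _)
  -- monotonicity facts: each pair inside each triple containing it
  have sub12b : ({v1, v2} : Finset V) ⊆ {v1, v2, v3} :=
    Finset.insert_subset_insert v1 (Finset.singleton_subset_iff.mpr (Finset.mem_insert_self v2 {v3}))
  have sub12d : ({v1, v2} : Finset V) ⊆ {v1, v2, v4} :=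
    Finset.insert_subset_insert v1 (Finset.singleton_subset_iff.mpr (Finset.mem_insert_self v2 {v4}))
  have sub13b : ({v1, v3} : Finset V) ⊆ {v1, v2, v3} :=
    Finset.insert_subset_insert v1 (Finset.subset_insert v2 {v3})
  have sub13e : ({v1, v3} : Finset V) ⊆ {v1, v3, v4} :=
    Finset.insert_subset_insert v1 (Finset.singleton_subset_iff.mpr (Finset.mem_insert_self v3 {v4}))
  have sub23b : ({v2, v3} : Finset V) ⊆ {v1, v2, v3} :=
    Finset.subset_insert v1 {v2, v3}
  have sub23c : ({v2, v3} : Finset V) ⊆ {v2, v3, v4} :=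
    Finset.insert_subset_insert v2 (Finset.singleton_subset_iff.mpr (Finset.mem_insert_self v3 {v4}))
  have sub24c : ({v2, v4} : Finset V) ⊆ {v2, v3, v4} :=
    Finset.insert_subset_insert v2 (Finset.subset_insert v3 {v4})
  have sub24d : ({v2, v4} : Finset V) ⊆ {v1, v2, v4} :=
    Finset.subset_insert v1 {v2, v4}
  have sub34c : ({v3, v4} : Finset V) ⊆ {v2, v3, v4} :=
    Finset.subset_insert v2 {v3, v4}
  have sub34e : ({v3, v4} : Finset V) ⊆ {v1, v3, v4} :=
    Finset.subset_insert v1 {v3, v4}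
  have m12b1 : x {v1, v2} v1 ≤ x {v1, v2, v3} v1 := hmono _ _ sub12b v1 (by simp)
  have m12b2 : x {v1, v2} v2 ≤ x {v1, v2, v3} v2 := hmono _ _ sub12b v2 (by simp)
  have m12d1 : x {v1, v2} v1 ≤ x {v1, v2, v4} v1 := hmono _ _ sub12d v1 (by simp)
  have m12d2 : x {v1, v2} v2 ≤ x {v1, v2, v4} v2 := hmono _ _ sub12d v2 (by simp)
  have m13b1 : x {v1, v3} v1 ≤ x {v1, v2, v3} v1 := hmono _ _ sub13b v1 (by simp)
  have m13b3 : x {v1, v3} v3 ≤ x {v1, v2, v3} v3 := hmono _ _ sub13b v3 (by simp)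
  have m13e1 : x {v1, v3} v1 ≤ x {v1, v3, v4} v1 := hmono _ _ sub13e v1 (by simp)
  have m13e3 : x {v1, v3} v3 ≤ x {v1, v3, v4} v3 := hmono _ _ sub13e v3 (by simp)
  have m23b2 : x {v2, v3} v2 ≤ x {v1, v2, v3} v2 := hmono _ _ sub23b v2 (by simp)
  have m23b3 : x {v2, v3} v3 ≤ x {v1, v2, v3} v3 := hmono _ _ sub23b v3 (by simp)
  have m23c2 : x {v2, v3} v2 ≤ x {v2, v3, v4} v2 := hmono _ _ sub23c v2 (by simp)
  have m23c3 : x {v2, v3} v3 ≤ x {v2, v3, v4} v3 := hmono _ _ sub23c v3 (by simp)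
  have m24c2 : x {v2, v4} v2 ≤ x {v2, v3, v4} v2 := hmono _ _ sub24c v2 (by simp)
  have m24c4 : x {v2, v4} v4 ≤ x {v2, v3, v4} v4 := hmono _ _ sub24c v4 (by simp)
  have m24d2 : x {v2, v4} v2 ≤ x {v1, v2, v4} v2 := hmono _ _ sub24d v2 (by simp)
  have m24d4 : x {v2, v4} v4 ≤ x {v1, v2, v4} v4 := hmono _ _ sub24d v4 (by simp)
  have m34c3 : x {v3, v4} v3 ≤ x {v2, v3, v4} v3 := hmono _ _ sub34c v3 (by simp)
  have m34c4 : x {v3, v4} v4 ≤ x {v2, v3, v4} v4 := hmono _ _ sub34c v4 (by simp)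
  have m34e3 : x {v3, v4} v3 ≤ x {v1, v3, v4} v3 := hmono _ _ sub34e v3 (by simp)
  have m34e4 : x {v3, v4} v4 ≤ x {v1, v3, v4} v4 := hmono _ _ sub34e v4 (by simp)
  -- nonnegativity of all used components
  have n12_1 : 0 ≤ x {v1, v2} v1 := hx0 _ _ (by simp)
  have n12_2 : 0 ≤ x {v1, v2} v2 := hx0 _ _ (by simp)
  have n13_1 : 0 ≤ x {v1, v3} v1 := hx0 _ _ (by simp)
  have n13_3 : 0 ≤ x {v1, v3} v3 := hx0 _ _ (by simp)
  have n23_2 : 0 ≤ x {v2, v3} v2 := hx0 _ _ (by simp)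
  have n23_3 : 0 ≤ x {v2, v3} v3 := hx0 _ _ (by simp)
  have n24_2 : 0 ≤ x {v2, v4} v2 := hx0 _ _ (by simp)
  have n24_4 : 0 ≤ x {v2, v4} v4 := hx0 _ _ (by simp)
  have n34_3 : 0 ≤ x {v3, v4} v3 := hx0 _ _ (by simp)
  have n34_4 : 0 ≤ x {v3, v4} v4 := hx0 _ _ (by simp)
  have nb1 : 0 ≤ x {v1, v2, v3} v1 := hx0 _ _ (by simp)
  have nb2 : 0 ≤ x {v1, v2, v3} v2 := hx0 _ _ (by simp)
  have nb3 : 0 ≤ x {v1, v2, v3} v3 := hx0 _ _ (by simp)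
  have nc2 : 0 ≤ x {v2, v3, v4} v2 := hx0 _ _ (by simp)
  have nc3 : 0 ≤ x {v2, v3, v4} v3 := hx0 _ _ (by simp)
  have nc4 : 0 ≤ x {v2, v3, v4} v4 := hx0 _ _ (by simp)
  have nd1 : 0 ≤ x {v1, v2, v4} v1 := hx0 _ _ (by simp)
  have nd2 : 0 ≤ x {v1, v2, v4} v2 := hx0 _ _ (by simp)
  have nd4 : 0 ≤ x {v1, v2, v4} v4 := hx0 _ _ (by simp)
  have ne1 : 0 ≤ x {v1, v3, v4} v1 := hx0 _ _ (by simp)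
  have ne3 : 0 ≤ x {v1, v3, v4} v3 := hx0 _ _ (by simp)
  have ne4 : 0 ≤ x {v1, v3, v4} v4 := hx0 _ _ (by simp)
  -- gamma lower bounds for triples
  have gb23 : w v2 v3 ≤ γ {v1, v2, v3} := gamma_ge G w _ _ (hγ _) v2 v3 h23 (by simp) (by simp)
  have gb12 : w v1 v2 ≤ γ {v1, v2, v3} := gamma_ge G w _ _ (hγ _) v1 v2 h12 (by simp) (by simp)
  have gb13 : w v1 v3 ≤ γ {v1, v2, v3} := gamma_ge G w _ _ (hγ _) v1 v3 h13 (by simp) (by simp)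
  have gc23 : w v2 v3 ≤ γ {v2, v3, v4} := gamma_ge G w _ _ (hγ _) v2 v3 h23 (by simp) (by simp)
  have gc24 : w v2 v4 ≤ γ {v2, v3, v4} := gamma_ge G w _ _ (hγ _) v2 v4 h24 (by simp) (by simp)
  have gc34 : w v3 v4 ≤ γ {v2, v3, v4} := gamma_ge G w _ _ (hγ _) v3 v4 h34 (by simp) (by simp)
  -- MAIN CASE ANALYSIS
  rcases hT1 with hA | hA | hA
  · -- γT1 ≤ w12 : contradiction
    exfalso
    -- b3 = 0
    have hb3 : x {v1, v2, v3} v3 ≤ 0 := by linarith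
    -- f13_3 = 0, f13_1 = w13
    have hf13 : x {v1, v3} v1 = w v1 v3 := by linarith
    -- f23_3 = 0, f23_2 = w23
    have hf23 : x {v2, v3} v2 = w v2 v3 := by linarith
    rcases hT2 with hB | hB | hB
    · linarith
    · -- γT2 ≤ w24 → c3 = 0 → f34_4 = w34 → contradiction on path {1,3,4}
      have hc3 : x {v2, v3, v4} v3 ≤ 0 := by linarith
      have hf34 : x {v3, v4} v4 = w v3 v4 := by linarith
      rcases hPe with hC | hC <;> linarith
    · linarith
  · -- γT1 ≤ w13 : contradiction
    exfalso
    have hb2 : x {v1, v2, v3} v2 ≤ 0 := by linarith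
    have hf12 : x {v1, v2} v1 = w v1 v2 := by linarith
    have hf23 : x {v2, v3} v3 = w v2 v3 := by linarith
    rcases hT2 with hB | hB | hB
    · linarith
    · linarith
    · -- γT2 ≤ w34 → c2 = 0 → f24_4 = w24 → contradiction on path {1,2,4}
      have hc2 : x {v2, v3, v4} v2 ≤ 0 := by linarith
      have hf24 : x {v2, v4} v4 = w v2 v4 := by linarith
      rcases hPd with hC | hC <;> linarith
  · -- γT1 ≤ w23 : first conclusion holds
    have hb1 : x {v1, v2, v3} v1 ≤ 0 := by linarith
    have hf12 : x {v1, v2} v2 = w v1 v2 := by linarith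
    have hf13 : x {v1, v3} v3 = w v1 v3 := by linarith
    have goal1 : w v2 v3 ≥ w v1 v2 + w v1 v3 := by linarith
    refine ⟨goal1, ?_⟩
    rcases hT2 with hB | hB | hB
    · -- γT2 ≤ w23 : c4 = 0 → conclusion
      have hc4 : x {v2, v3, v4} v4 ≤ 0 := by linarith
      have hf24 : x {v2, v4} v2 = w v2 v4 := by linarith
      have hf34 : x {v3, v4} v3 = w v3 v4 := by linarith
      linarith
    · -- γT2 ≤ w24 : c3 = 0 → f23_2 = w23 ≤ b2, contradiction
      exfalso
      have hc3 : x {v2, v3, v4} v3 ≤ 0 := by linarith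
      have hf23 : x {v2, v3} v2 = w v2 v3 := by linarith
      linarith
    · -- γT2 ≤ w34 : c2 = 0 → f23_3 = w23 ≤ b3, contradiction
      exfalso
      have hc2 : x {v2, v3, v4} v2 ≤ 0 := by linarith
      have hf23 : x {v2, v3} v3 = w v2 v3 := by linarith
      linarith
end

section
/- Let G = (V, E; w) be a graph with strictly positive edge weights. If the matching game Γ_G admits a PMAS, then G contains no induced 4-cycle C_4, i.e., there do not exist distinct vertices 1, 2, 3, 4 whose induced subgraph has edge set exactly {12, 23, 34, 14}. -/
open Finset

lemma triple_bound {V : Type*} [DecidableEq V] (G : SimpleGraph V) (w : V → V → ℝ)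
    (hsym : ∀ a b : V, w a b = w b a)
    {a b c : V} (hab : a ≠ b) (hac : a ≠ c) (hbc : b ≠ c)
    (hnac : ¬ G.Adj a c) (h0 : 0 ≤ max (w a b) (w b c))
    {M : Finset (V × V)} (hM : IsMatchingIn G ({a,b,c} : Finset V) M) :
    ∑ p ∈ M, w p.1 p.2 ≤ max (w a b) (w b c) := by
  obtain ⟨hmem, hdisj⟩ := hM
  have hcard : M.card ≤ 1 := by
    rw [Finset.card_le_one]
    intro p hp q hq
    by_contra hne
    obtain ⟨h1, h2, h3, h4⟩ := hdisj p hp q hq hne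
    obtain ⟨hpadj, hp1, hp2⟩ := hmem p hp
    obtain ⟨hqadj, hq1, hq2⟩ := hmem q hq
    have hpne : p.1 ≠ p.2 := hpadj.ne
    have hqne : q.1 ≠ q.2 := hqadj.ne
    have hsub : ({p.1, p.2, q.1, q.2} : Finset V) ⊆ {a, b, c} := by
      intro z hz
      simp only [mem_insert, mem_singleton] at hz
      rcases hz with rfl | rfl | rfl | rfl <;> assumption
    have h4c : ({p.1, p.2, q.1, q.2} : Finset V).card = 4 := by
      rw [card_insert_of_notMem (by simp [hpne, h1, h2]),
        card_insert_of_notMem (by simp [h3, h4]),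
        card_insert_of_notMem (by simp [hqne]), card_singleton]
    have h3c : ({a, b, c} : Finset V).card = 3 := by
      rw [card_insert_of_notMem (by simp [hab, hac]),
        card_insert_of_notMem (by simp [hbc]), card_singleton]
    have := Finset.card_le_card hsub
    omega
  rcases M.eq_empty_or_nonempty with rfl | ⟨p, hp⟩
  · simpa using h0
  · have hMp : M = {p} := Finset.eq_singleton_iff_unique_mem.mpr
      ⟨hp, fun q hq => Finset.card_le_one.mp hcard q hq p hp⟩
    subst hMp
    obtain ⟨hadj, h1, h2⟩ := hmem p (mem_singleton_self p)
    rw [sum_singleton]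
    simp only [mem_insert, mem_singleton] at h1 h2
    rcases h1 with e1 | e1 | e1 <;> rcases h2 with e2 | e2 | e2
    · exact absurd hadj (by rw [e1, e2]; exact G.loopless.irrefl a)
    · rw [e1, e2]; exact le_max_left _ _
    · exact absurd hadj (by rw [e1, e2]; exact hnac)
    · rw [e1, e2, hsym b a]; exact le_max_left _ _
    · exact absurd hadj (by rw [e1, e2]; exact G.loopless.irrefl b)
    · rw [e1, e2]; exact le_max_right _ _
    · exact absurd hadj (by rw [e1, e2]; exact fun h => hnac h.symm)
    · rw [e1, e2, hsym c b]; exact le_max_right _ _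
    · exact absurd hadj (by rw [e1, e2]; exact G.loopless.irrefl c)

lemma C4_aux {V : Type*} [DecidableEq V]
    (G : SimpleGraph V) (w : V → V → ℝ)
    (hsym : ∀ a b : V, w a b = w b a)
    (hpos : ∀ a b : V, G.Adj a b → 0 < w a b)
    (γ : Finset V → ℝ) (hγ : ∀ S : Finset V, IsMaxMatchingWeight G w S (γ S))
    (x : Finset V → V → ℝ) (hx : IsPMAS γ x)
    (v1 v2 v3 v4 : V)
    (h12 : v1 ≠ v2) (h13 : v1 ≠ v3) (h14 : v1 ≠ v4)
    (h23 : v2 ≠ v3) (h24 : v2 ≠ v4) (h34 : v3 ≠ v4)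
    (a12 : G.Adj v1 v2) (a23 : G.Adj v2 v3) (a34 : G.Adj v3 v4) (a14 : G.Adj v1 v4)
    (n13 : ¬ G.Adj v1 v3) (n24 : ¬ G.Adj v2 v4)
    (hmax : w v1 v4 ≤ w v1 v2) : False := by
  obtain ⟨heff, hmono⟩ := hx
  -- the empty matching shows γ S ≥ 0
  have hγ0 : ∀ S : Finset V, 0 ≤ γ S := by
    intro S
    have := (hγ S).2 ∅ ⟨by simp, by simp⟩
    simpa using this
  -- singletons have value 0
  have hsing : ∀ v : V, γ {v} = 0 := by
    intro v
    obtain ⟨⟨M, hM, hsum⟩, _⟩ := hγ {v}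
    have hMe : M = ∅ := by
      apply Finset.eq_empty_of_forall_notMem
      intro p hp
      obtain ⟨hadj, h1, h2⟩ := hM.1 p hp
      simp only [Finset.mem_singleton] at h1 h2
      rw [h1, h2] at hadj
      exact G.loopless.irrefl v hadj
    rw [hMe] at hsum
    simpa using hsum.symm
  -- x is nonnegative
  have hxnn : ∀ (S : Finset V) (v : V), v ∈ S → 0 ≤ x S v := by
    intro S v hv
    have h1 : x {v} v = γ {v} := by
      have := heff {v} ⟨v, Finset.mem_singleton_self v⟩
      simpa using this
    have h2 := hmono {v} S (by simpa using hv) v (Finset.mem_singleton_self v)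
    rw [h1, hsing v] at h2
    exact h2
  -- the single-edge matching shows γ {a,b} ≥ w a b
  have hpairγ : ∀ a b : V, G.Adj a b → w a b ≤ γ {a, b} := by
    intro a b hadj
    have := (hγ {a, b}).2 {(a, b)} ⟨by simp [hadj], by simp⟩
    simpa using this
  have hpairsum : ∀ a b : V, a ≠ b → x {a, b} a + x {a, b} b = γ {a, b} := by
    intro a b hne
    have := heff {a, b} ⟨a, by simp⟩
    rwa [Finset.sum_pair hne] at this
  -- Step 1: in T = {v4, v1, v2}, v4 gets 0
  set T : Finset V := {v4, v1, v2} with hT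
  have hTsum : x T v4 + (x T v1 + x T v2) = γ T := by
    have := heff T ⟨v4, by simp [hT]⟩
    rw [hT, Finset.sum_insert (by simp [h14.symm, h24.symm]),
      Finset.sum_pair h12] at this
    exact this
  have hTub : γ T ≤ w v1 v2 := by
    obtain ⟨⟨M, hM, hsum⟩, _⟩ := hγ T
    have hb := triple_bound G w hsym (a := v4) (b := v1) (c := v2)
      (Ne.symm h14) (Ne.symm h24) h12 (fun h => n24 h.symm)
      (le_of_lt (lt_of_lt_of_le (hpos v1 v2 a12) (le_max_right _ _))) hM
    rw [hsum] at hb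
    exact le_trans hb (max_le ((hsym v4 v1).trans_le hmax) le_rfl)
  have hlow : γ {v1, v2} ≤ x T v1 + x T v2 := by
    rw [← hpairsum v1 v2 h12]
    have hsub : ({v1, v2} : Finset V) ⊆ T := by
      intro z hz; simp only [Finset.mem_insert, Finset.mem_singleton] at hz
      rcases hz with rfl | rfl <;> simp [hT]
    exact add_le_add (hmono _ _ hsub v1 (by simp)) (hmono _ _ hsub v2 (by simp))
  have h4zero : x T v4 ≤ 0 := by
    have := hpairγ v1 v2 a12
    linarith
  have hsub14T : ({v1, v4} : Finset V) ⊆ T := by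
    intro z hz; simp only [Finset.mem_insert, Finset.mem_singleton] at hz
    rcases hz with rfl | rfl <;> simp [hT]
  have h14v4 : x {v1, v4} v4 = 0 := le_antisymm
    (le_trans (hmono _ _ hsub14T v4 (by simp)) h4zero) (hxnn _ v4 (by simp))
  have h14v1 : w v1 v4 ≤ x {v1, v4} v1 := by
    have hs := hpairsum v1 v4 h14
    have := hpairγ v1 v4 a14
    linarith
  -- Step 2: in U = {v3, v4, v1}, total value is too big
  set U : Finset V := {v3, v4, v1} with hU
  have hUsum : x U v3 + (x U v4 + x U v1) = γ U := by
    have := heff U ⟨v3, by simp [hU]⟩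
    rw [hU, Finset.sum_insert (by simp [h34, h13.symm]),
      Finset.sum_pair (Ne.symm h14)] at this
    exact this
  have hUub : γ U ≤ max (w v3 v4) (w v4 v1) := by
    obtain ⟨⟨M, hM, hsum⟩, _⟩ := hγ U
    have hb := triple_bound G w hsym (a := v3) (b := v4) (c := v1)
      h34 (Ne.symm h13) (Ne.symm h14) (fun h => n13 h.symm)
      (le_of_lt (lt_of_lt_of_le (hpos v3 v4 a34) (le_max_left _ _))) hM
    rw [hsum] at hb
    exact hb
  have h34low : γ {v3, v4} ≤ x U v3 + x U v4 := by
    rw [← hpairsum v3 v4 h34]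
    have hsub : ({v3, v4} : Finset V) ⊆ U := by
      intro z hz; simp only [Finset.mem_insert, Finset.mem_singleton] at hz
      rcases hz with rfl | rfl <;> simp [hU]
    exact add_le_add (hmono _ _ hsub v3 (by simp)) (hmono _ _ hsub v4 (by simp))
  have h1low : w v1 v4 ≤ x U v1 := by
    refine le_trans h14v1 (hmono {v1, v4} U ?_ v1 (by simp))
    intro z hz; simp only [Finset.mem_insert, Finset.mem_singleton] at hz
    rcases hz with rfl | rfl <;> simp [hU]
  have hw34 := hpos v3 v4 a34
  have hw14 := hpos v1 v4 a14
  have hγU : w v3 v4 + w v1 v4 ≤ γ U := by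
    have := hpairγ v3 v4 a34
    linarith
  have hm : max (w v3 v4) (w v4 v1) < w v3 v4 + w v1 v4 :=
    max_lt (by linarith) (by rw [hsym v4 v1]; linarith)
  linarith

/-- C₄-freeness (Lemma 3.6). -/
theorem matchingGame_C4_free {V : Type*} [Fintype V] [DecidableEq V]
    (G : SimpleGraph V) (w : V → V → ℝ)
    (hsym : ∀ a b : V, w a b = w b a)
    (hpos : ∀ a b : V, G.Adj a b → 0 < w a b)
    (γ : Finset V → ℝ)
    (hγ : ∀ S : Finset V, IsMaxMatchingWeight G w S (γ S))
    (hpmas : ∃ x : Finset V → V → ℝ, IsPMAS γ x) :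
    ¬ ∃ v1 v2 v3 v4 : V,
      v1 ≠ v2 ∧ v1 ≠ v3 ∧ v1 ≠ v4 ∧ v2 ≠ v3 ∧ v2 ≠ v4 ∧ v3 ≠ v4 ∧
      G.Adj v1 v2 ∧ G.Adj v2 v3 ∧ G.Adj v3 v4 ∧ G.Adj v1 v4 ∧
      ¬ G.Adj v1 v3 ∧ ¬ G.Adj v2 v4 := by
  rintro ⟨v1, v2, v3, v4, h12, h13, h14, h23, h24, h34,
    a12, a23, a34, a14, n13, n24⟩
  obtain ⟨x, hx⟩ := hpmas
  rcases le_or_gt (w v1 v4) (w v1 v2) with h | hlt1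
  · exact C4_aux G w hsym hpos γ hγ x hx v1 v2 v3 v4
      h12 h13 h14 h23 h24 h34 a12 a23 a34 a14 n13 n24 h
  rcases le_or_gt (w v1 v2) (w v2 v3) with h | hlt2
  · exact C4_aux G w hsym hpos γ hγ x hx v2 v3 v4 v1
      h23 h24 (Ne.symm h12) h34 (Ne.symm h13) (Ne.symm h14)
      a23 a34 a14.symm a12.symm n24 (fun hh => n13 hh.symm)
      ((hsym v2 v1).trans_le h)
  rcases le_or_gt (w v2 v3) (w v3 v4) with h | hlt3
  · exact C4_aux G w hsym hpos γ hγ x hx v3 v4 v1 v2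
      h34 (Ne.symm h13) (Ne.symm h23) (Ne.symm h14) (Ne.symm h24) h12
      a34 a14.symm a12 a23.symm (fun hh => n13 hh.symm) (fun hh => n24 hh.symm)
      ((hsym v3 v2).trans_le h)
  rcases le_or_gt (w v3 v4) (w v1 v4) with h | hlt4
  · exact C4_aux G w hsym hpos γ hγ x hx v4 v1 v2 v3
      (Ne.symm h14) (Ne.symm h24) (Ne.symm h34) h12 h13 h23
      a14.symm a12 a23 a34.symm (fun hh => n24 hh.symm) n13
      (by rw [hsym v4 v3, hsym v4 v1]; exact h)
  linarith
end

section
/- Let G = (V, E; w) be a graph with strictly positive edge weights. If the matching game Γ_G admits a PMAS, then G contains no clique on 4 vertices, i.e., there do not exist distinct vertices 1, 2, 3, 4 that are pairwise adjacent in G. -/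
open Finset

/-- K₄-freeness (Lemma 3.7). -/
theorem matchingGame_K4_free {V : Type*} [Fintype V] [DecidableEq V]
    (G : SimpleGraph V) (w : V → V → ℝ)
    (hsym : ∀ a b : V, w a b = w b a)
    (hpos : ∀ a b : V, G.Adj a b → 0 < w a b)
    (γ : Finset V → ℝ)
    (hγ : ∀ S : Finset V, IsMaxMatchingWeight G w S (γ S))
    (hpmas : ∃ x : Finset V → V → ℝ, IsPMAS γ x) :
    ¬ ∃ v1 v2 v3 v4 : V,
      v1 ≠ v2 ∧ v1 ≠ v3 ∧ v1 ≠ v4 ∧ v2 ≠ v3 ∧ v2 ≠ v4 ∧ v3 ≠ v4 ∧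
      G.Adj v1 v2 ∧ G.Adj v1 v3 ∧ G.Adj v1 v4 ∧
      G.Adj v2 v3 ∧ G.Adj v2 v4 ∧ G.Adj v3 v4 := by
  rintro ⟨v1, v2, v3, v4, h12, h13, h14, h23, h24, h34,
    a12, a13, a14, a23, a24, a34⟩
  obtain ⟨x, hx1, hx2⟩ := hpmas
  -- singleton coalitions have value 0
  have hsing : ∀ i : V, γ {i} = 0 := by
    intro i
    obtain ⟨⟨M, ⟨hM1, _⟩, hsum⟩, _⟩ := hγ {i}
    have hM : M = ∅ := by
      apply Finset.eq_empty_iff_forall_notMem.mpr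
      intro p hp
      obtain ⟨hadj, hp1, hp2⟩ := hM1 p hp
      simp only [Finset.mem_singleton] at hp1 hp2
      exact G.ne_of_adj hadj (hp1.trans hp2.symm)
    rw [hM, Finset.sum_empty] at hsum
    exact hsum.symm
  -- allocations are nonnegative
  have hnn : ∀ (S : Finset V) (i : V), i ∈ S → 0 ≤ x S i := by
    intro S i hi
    have h0 : x {i} i = γ {i} := by
      have := hx1 {i} (Finset.singleton_nonempty i)
      simpa using this
    have hm := hx2 {i} S (by simpa using hi) i (Finset.mem_singleton_self i)
    rw [h0, hsing i] at hm
    exact hm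
  -- cross-coalition pair lower bound
  have hpair : ∀ a b : V, G.Adj a b → ∀ S S' : Finset V,
      a ∈ S → b ∈ S → a ∈ S' → b ∈ S' → w a b ≤ x S a + x S' b := by
    intro a b hadj S S' haS hbS haS' hbS'
    have hne : a ≠ b := G.ne_of_adj hadj
    have h1 : w a b ≤ γ {a, b} := by
      obtain ⟨_, hub⟩ := hγ {a, b}
      have hm : IsMatchingIn G {a, b} {(a, b)} := by
        constructor
        · intro p hp
          simp only [Finset.mem_singleton] at hp
          subst hp
          exact ⟨hadj, by simp, by simp⟩
        · intro p hp q hq hpq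
          simp only [Finset.mem_singleton] at hp hq
          exact absurd (hp.trans hq.symm) hpq
      have := hub {(a, b)} hm
      simpa using this
    have h2 : x {a, b} a + x {a, b} b = γ {a, b} := by
      have := hx1 {a, b} ⟨a, by simp⟩
      rwa [Finset.sum_pair hne] at this
    have hsub : ({a, b} : Finset V) ⊆ S := by
      simp [Finset.insert_subset_iff, haS, hbS]
    have hsub' : ({a, b} : Finset V) ⊆ S' := by
      simp [Finset.insert_subset_iff, haS', hbS']
    have h3 := hx2 {a, b} S hsub a (by simp)
    have h4 := hx2 {a, b} S' hsub' b (by simp)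
    linarith
  -- a triangle's value is at most one of its edge weights
  have htri : ∀ a b c : V, a ≠ b → a ≠ c → b ≠ c →
      G.Adj a b → G.Adj a c → G.Adj b c →
      γ {a, b, c} ≤ w a b ∨ γ {a, b, c} ≤ w a c ∨ γ {a, b, c} ≤ w b c := by
    intro a b c hab hac hbc Aab Aac Abc
    obtain ⟨⟨M, ⟨hM1, hM2⟩, hsum⟩, _⟩ := hγ {a, b, c}
    rcases M.eq_empty_or_nonempty with rfl | ⟨p, hp⟩
    · left
      rw [Finset.sum_empty] at hsum
      rw [← hsum]
      exact (hpos a b Aab).le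
    · have hMp : M = {p} := by
        apply Finset.eq_singleton_iff_unique_mem.mpr
        refine ⟨hp, fun q hq => ?_⟩
        by_contra hqp
        obtain ⟨d1, d2, d3, d4⟩ := hM2 q hq p hp hqp
        obtain ⟨hadjp, hp1, hp2⟩ := hM1 p hp
        obtain ⟨hadjq, hq1, hq2⟩ := hM1 q hq
        have hpe : p.1 ≠ p.2 := G.ne_of_adj hadjp
        have hqe : q.1 ≠ q.2 := G.ne_of_adj hadjq
        have hsub : ({p.1, p.2, q.1, q.2} : Finset V) ⊆ {a, b, c} := by
          intro z hz
          simp only [Finset.mem_insert, Finset.mem_singleton] at hz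
          rcases hz with rfl | rfl | rfl | rfl <;> assumption
        have hc4 : ({p.1, p.2, q.1, q.2} : Finset V).card = 4 := by
          rw [Finset.card_insert_of_notMem (by simp [hpe, d1.symm, d3.symm]),
            Finset.card_insert_of_notMem (by simp [d2.symm, d4.symm]),
            Finset.card_insert_of_notMem (by simp [hqe]),
            Finset.card_singleton]
        have hc3 : ({a, b, c} : Finset V).card = 3 := by
          rw [Finset.card_insert_of_notMem (by simp [hab, hac]),
            Finset.card_insert_of_notMem (by simp [hbc]),
            Finset.card_singleton]
        have := Finset.card_le_card hsub
        omega
      obtain ⟨hadjp, hp1, hp2⟩ := hM1 p hp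
      simp only [Finset.mem_insert, Finset.mem_singleton] at hp1 hp2
      have hpe : p.1 ≠ p.2 := G.ne_of_adj hadjp
      have key : γ ({a, b, c} : Finset V) = w p.1 p.2 := by
        rw [← hsum, hMp, Finset.sum_singleton]
      rcases hp1 with e1 | e1 | e1 <;> rcases hp2 with e2 | e2 | e2 <;>
        rw [e1, e2] at key hpe <;>
        first
        | exact absurd rfl hpe
        | exact Or.inl key.le
        | exact Or.inr (Or.inl key.le)
        | exact Or.inr (Or.inr key.le)
        | (rw [hsym] at key
           first
           | exact Or.inl key.le
           | exact Or.inr (Or.inl key.le)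
           | exact Or.inr (Or.inr key.le))
  -- efficiency on triangles
  have esum : ∀ a b c : V, a ≠ b → a ≠ c → b ≠ c →
      x {a, b, c} a + (x {a, b, c} b + x {a, b, c} c) = γ {a, b, c} := by
    intro a b c hab hac hbc
    have h := hx1 {a, b, c} ⟨a, by simp⟩
    rwa [Finset.sum_insert (by simp [hab, hac]), Finset.sum_pair hbc] at h
  have nn12 : (0:ℝ) ≤ x {v2, v3, v4} v2 := hnn _ _ (by simp)
  have nn13 : (0:ℝ) ≤ x {v2, v3, v4} v3 := hnn _ _ (by simp)
  have nn14 : (0:ℝ) ≤ x {v2, v3, v4} v4 := hnn _ _ (by simp)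
  have nn21 : (0:ℝ) ≤ x {v1, v3, v4} v1 := hnn _ _ (by simp)
  have nn23 : (0:ℝ) ≤ x {v1, v3, v4} v3 := hnn _ _ (by simp)
  have nn24 : (0:ℝ) ≤ x {v1, v3, v4} v4 := hnn _ _ (by simp)
  have nn31 : (0:ℝ) ≤ x {v1, v2, v4} v1 := hnn _ _ (by simp)
  have nn32 : (0:ℝ) ≤ x {v1, v2, v4} v2 := hnn _ _ (by simp)
  have nn34 : (0:ℝ) ≤ x {v1, v2, v4} v4 := hnn _ _ (by simp)
  have nn41 : (0:ℝ) ≤ x {v1, v2, v3} v1 := hnn _ _ (by simp)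
  have nn42 : (0:ℝ) ≤ x {v1, v2, v3} v2 := hnn _ _ (by simp)
  have nn43 : (0:ℝ) ≤ x {v1, v2, v3} v3 := hnn _ _ (by simp)
  have wp12 : (0:ℝ) < w v1 v2 := hpos _ _ a12
  have wp13 : (0:ℝ) < w v1 v3 := hpos _ _ a13
  have wp14 : (0:ℝ) < w v1 v4 := hpos _ _ a14
  have wp23 : (0:ℝ) < w v2 v3 := hpos _ _ a23
  have wp24 : (0:ℝ) < w v2 v4 := hpos _ _ a24
  have wp34 : (0:ℝ) < w v3 v4 := hpos _ _ a34
  have pr12_33 : w v1 v2 ≤ x {v1, v2, v4} v1 + x {v1, v2, v4} v2 := hpair v1 v2 a12 _ _ (by simp) (by simp) (by simp) (by simp)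
  have pr12_34 : w v1 v2 ≤ x {v1, v2, v4} v1 + x {v1, v2, v3} v2 := hpair v1 v2 a12 _ _ (by simp) (by simp) (by simp) (by simp)
  have pr12_43 : w v1 v2 ≤ x {v1, v2, v3} v1 + x {v1, v2, v4} v2 := hpair v1 v2 a12 _ _ (by simp) (by simp) (by simp) (by simp)
  have pr12_44 : w v1 v2 ≤ x {v1, v2, v3} v1 + x {v1, v2, v3} v2 := hpair v1 v2 a12 _ _ (by simp) (by simp) (by simp) (by simp)
  have pr13_22 : w v1 v3 ≤ x {v1, v3, v4} v1 + x {v1, v3, v4} v3 := hpair v1 v3 a13 _ _ (by simp) (by simp) (by simp) (by simp)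
  have pr13_24 : w v1 v3 ≤ x {v1, v3, v4} v1 + x {v1, v2, v3} v3 := hpair v1 v3 a13 _ _ (by simp) (by simp) (by simp) (by simp)
  have pr13_42 : w v1 v3 ≤ x {v1, v2, v3} v1 + x {v1, v3, v4} v3 := hpair v1 v3 a13 _ _ (by simp) (by simp) (by simp) (by simp)
  have pr13_44 : w v1 v3 ≤ x {v1, v2, v3} v1 + x {v1, v2, v3} v3 := hpair v1 v3 a13 _ _ (by simp) (by simp) (by simp) (by simp)
  have pr14_22 : w v1 v4 ≤ x {v1, v3, v4} v1 + x {v1, v3, v4} v4 := hpair v1 v4 a14 _ _ (by simp) (by simp) (by simp) (by simp)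
  have pr14_23 : w v1 v4 ≤ x {v1, v3, v4} v1 + x {v1, v2, v4} v4 := hpair v1 v4 a14 _ _ (by simp) (by simp) (by simp) (by simp)
  have pr14_32 : w v1 v4 ≤ x {v1, v2, v4} v1 + x {v1, v3, v4} v4 := hpair v1 v4 a14 _ _ (by simp) (by simp) (by simp) (by simp)
  have pr14_33 : w v1 v4 ≤ x {v1, v2, v4} v1 + x {v1, v2, v4} v4 := hpair v1 v4 a14 _ _ (by simp) (by simp) (by simp) (by simp)
  have pr23_11 : w v2 v3 ≤ x {v2, v3, v4} v2 + x {v2, v3, v4} v3 := hpair v2 v3 a23 _ _ (by simp) (by simp) (by simp) (by simp)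
  have pr23_14 : w v2 v3 ≤ x {v2, v3, v4} v2 + x {v1, v2, v3} v3 := hpair v2 v3 a23 _ _ (by simp) (by simp) (by simp) (by simp)
  have pr23_41 : w v2 v3 ≤ x {v1, v2, v3} v2 + x {v2, v3, v4} v3 := hpair v2 v3 a23 _ _ (by simp) (by simp) (by simp) (by simp)
  have pr23_44 : w v2 v3 ≤ x {v1, v2, v3} v2 + x {v1, v2, v3} v3 := hpair v2 v3 a23 _ _ (by simp) (by simp) (by simp) (by simp)
  have pr24_11 : w v2 v4 ≤ x {v2, v3, v4} v2 + x {v2, v3, v4} v4 := hpair v2 v4 a24 _ _ (by simp) (by simp) (by simp) (by simp)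
  have pr24_13 : w v2 v4 ≤ x {v2, v3, v4} v2 + x {v1, v2, v4} v4 := hpair v2 v4 a24 _ _ (by simp) (by simp) (by simp) (by simp)
  have pr24_31 : w v2 v4 ≤ x {v1, v2, v4} v2 + x {v2, v3, v4} v4 := hpair v2 v4 a24 _ _ (by simp) (by simp) (by simp) (by simp)
  have pr24_33 : w v2 v4 ≤ x {v1, v2, v4} v2 + x {v1, v2, v4} v4 := hpair v2 v4 a24 _ _ (by simp) (by simp) (by simp) (by simp)
  have pr34_11 : w v3 v4 ≤ x {v2, v3, v4} v3 + x {v2, v3, v4} v4 := hpair v3 v4 a34 _ _ (by simp) (by simp) (by simp) (by simp)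
  have pr34_12 : w v3 v4 ≤ x {v2, v3, v4} v3 + x {v1, v3, v4} v4 := hpair v3 v4 a34 _ _ (by simp) (by simp) (by simp) (by simp)
  have pr34_21 : w v3 v4 ≤ x {v1, v3, v4} v3 + x {v2, v3, v4} v4 := hpair v3 v4 a34 _ _ (by simp) (by simp) (by simp) (by simp)
  have pr34_22 : w v3 v4 ≤ x {v1, v3, v4} v3 + x {v1, v3, v4} v4 := hpair v3 v4 a34 _ _ (by simp) (by simp) (by simp) (by simp)
  have T1 := htri v2 v3 v4 h23 h24 h34 a23 a24 a34
  have E1 := esum v2 v3 v4 h23 h24 h34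
  have T2 := htri v1 v3 v4 h13 h14 h34 a13 a14 a34
  have E2 := esum v1 v3 v4 h13 h14 h34
  have T3 := htri v1 v2 v4 h12 h14 h24 a12 a14 a24
  have E3 := esum v1 v2 v4 h12 h14 h24
  have T4 := htri v1 v2 v3 h12 h13 h23 a12 a13 a23
  have E4 := esum v1 v2 v3 h12 h13 h23
  rcases T1 with t1 | t1 | t1 <;> rcases T2 with t2 | t2 | t2 <;>
    rcases T3 with t3 | t3 | t3 <;> rcases T4 with t4 | t4 | t4 <;> linarith
end

section
/- Let G = (V, E; w) be a graph with strictly positive edge weights. If the matching game Γ_G admits a PMAS, then G contains no induced co-banner: there do not exist distinct vertices 1, 2, 3, 4, 5 whose induced subgraph has edge set exactly {12, 23, 34, 35, 45}. -/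
open Finset

/-- auxiliary: a finset on which all members coincide has sum bounded by any
nonnegative bound on its elements. -/
lemma sum_le_of_unique {α : Type*} [DecidableEq α] (M : Finset α) (f : α → ℝ) (C : ℝ)
    (h0 : 0 ≤ C) (h1 : ∀ p ∈ M, ∀ q ∈ M, p = q) (hw : ∀ p ∈ M, f p ≤ C) :
    ∑ p ∈ M, f p ≤ C := by
  rcases M.eq_empty_or_nonempty with rfl | ⟨p, hp⟩
  · simpa using h0
  · have hM : M = {p} := by
      apply Finset.eq_singleton_iff_unique_mem.mpr
      exact ⟨hp, fun q hq => h1 q hq p hp⟩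
    rw [hM, Finset.sum_singleton]
    exact hw p hp

set_option maxHeartbeats 2000000 in
/-- Co-banner-freeness (Lemma 3.9). -/
theorem matchingGame_coBanner_free {V : Type*} [Fintype V] [DecidableEq V]
    (G : SimpleGraph V) (w : V → V → ℝ)
    (hsym : ∀ a b : V, w a b = w b a)
    (hpos : ∀ a b : V, G.Adj a b → 0 < w a b)
    (γ : Finset V → ℝ)
    (hγ : ∀ S : Finset V, IsMaxMatchingWeight G w S (γ S))
    (hpmas : ∃ x : Finset V → V → ℝ, IsPMAS γ x) :
    ¬ ∃ v1 v2 v3 v4 v5 : V,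
      v1 ≠ v2 ∧ v1 ≠ v3 ∧ v1 ≠ v4 ∧ v1 ≠ v5 ∧ v2 ≠ v3 ∧ v2 ≠ v4 ∧ v2 ≠ v5 ∧
      v3 ≠ v4 ∧ v3 ≠ v5 ∧ v4 ≠ v5 ∧
      G.Adj v1 v2 ∧ G.Adj v2 v3 ∧ G.Adj v3 v4 ∧ G.Adj v3 v5 ∧ G.Adj v4 v5 ∧
      ¬ G.Adj v1 v3 ∧ ¬ G.Adj v1 v4 ∧ ¬ G.Adj v1 v5 ∧ ¬ G.Adj v2 v4 ∧ ¬ G.Adj v2 v5 := by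
  rintro ⟨v1, v2, v3, v4, v5, h12, h13, h14, h15, h23, h24, h25, h34, h35, h45,
    A12, A23, A34, A35, A45, N13, N14, N15, N24, N25⟩
  obtain ⟨x, heff, hmono⟩ := hpmas
  have N31 : ¬ G.Adj v3 v1 := fun h => N13 h.symm
  have N41 : ¬ G.Adj v4 v1 := fun h => N14 h.symm
  have N51 : ¬ G.Adj v5 v1 := fun h => N15 h.symm
  have N42 : ¬ G.Adj v4 v2 := fun h => N24 h.symm
  have N52 : ¬ G.Adj v5 v2 := fun h => N25 h.symm
  have ha : 0 < w v1 v2 := hpos _ _ A12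
  have hb : 0 < w v2 v3 := hpos _ _ A23
  have hc : 0 < w v3 v4 := hpos _ _ A34
  have hd : 0 < w v3 v5 := hpos _ _ A35
  have he : 0 < w v4 v5 := hpos _ _ A45
  -- singleton gamma is zero
  have hsing : ∀ v : V, γ ({v} : Finset V) = 0 := by
    intro v
    obtain ⟨⟨M0, ⟨hmem, _⟩, hs⟩, _⟩ := hγ {v}
    have hM0 : M0 = ∅ := by
      apply Finset.eq_empty_iff_forall_notMem.mpr
      intro p hp
      obtain ⟨hadj, hm1, hm2⟩ := hmem p hp
      simp only [Finset.mem_singleton] at hm1 hm2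
      exact G.ne_of_adj hadj (hm1.trans hm2.symm)
    rw [← hs, hM0, Finset.sum_empty]
  -- nonnegativity of allocations
  have nn : ∀ S : Finset V, ∀ i ∈ S, 0 ≤ x S i := by
    intro S i hi
    have h1 : x {i} i = 0 := by
      have h := heff {i} ⟨i, Finset.mem_singleton_self i⟩
      rwa [Finset.sum_singleton, hsing] at h
    have h2 := hmono {i} S (Finset.singleton_subset_iff.mpr hi) i (Finset.mem_singleton_self i)
    linarith
  -- single edge lower bound for gamma
  have hedge_le : ∀ (S : Finset V) (α β : V), G.Adj α β → α ∈ S → β ∈ S →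
      w α β ≤ γ S := by
    intro S α β h hm1 hm2
    have hm : IsMatchingIn G S {(α, β)} := by
      constructor
      · intro p hp
        simp only [Finset.mem_singleton] at hp
        subst hp
        exact ⟨h, hm1, hm2⟩
      · intro p hp q hq hne
        simp only [Finset.mem_singleton] at hp hq
        subst hp; subst hq; exact absurd rfl hne
    have h' := (hγ S).2 _ hm
    simpa using h'
  -- gamma of a pair
  have hpair : ∀ α β : V, G.Adj α β → γ {α, β} = w α β := by
    intro α β hadj
    obtain ⟨⟨M0, ⟨hmem, hdis⟩, hs⟩, _⟩ := hγ {α, β}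
    have hclass : ∀ p ∈ M0, (p.1 = α ∧ p.2 = β) ∨ (p.1 = β ∧ p.2 = α) := by
      intro p hp
      obtain ⟨hadjp, hm1, hm2⟩ := hmem p hp
      have hne' := G.ne_of_adj hadjp
      simp only [Finset.mem_insert, Finset.mem_singleton] at hm1 hm2
      rcases hm1 with h1 | h1 <;> rcases hm2 with h2 | h2
      · exact absurd (h1.trans h2.symm) hne'
      · exact Or.inl ⟨h1, h2⟩
      · exact Or.inr ⟨h1, h2⟩
      · exact absurd (h1.trans h2.symm) hne'
    have upper : γ {α, β} ≤ w α β := by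
      rw [← hs]
      apply sum_le_of_unique _ _ _ (le_of_lt (hpos _ _ hadj))
      · intro p hp q hq
        by_contra hne2
        obtain ⟨d1, d2, d3, d4⟩ := hdis p hp q hq hne2
        rcases hclass p hp with ⟨e1, e2⟩ | ⟨e1, e2⟩ <;>
          rcases hclass q hq with ⟨f1, f2⟩ | ⟨f1, f2⟩
        · exact d1 (e1.trans f1.symm)
        · exact d2 (e1.trans f2.symm)
        · exact d2 (e1.trans f2.symm)
        · exact d1 (e1.trans f1.symm)
      · intro p hp
        rcases hclass p hp with ⟨e1, e2⟩ | ⟨e1, e2⟩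
        · rw [e1, e2]
        · rw [e1, e2, hsym β α]
    exact le_antisymm upper (hedge_le _ _ _ hadj (by simp) (by simp))
  -- any matching inside a 3-element vertex set has at most one edge
  have htripleU : ∀ (α β δ : V) (M : Finset (V × V)), IsMatchingIn G {α, β, δ} M →
      ∀ p ∈ M, ∀ q ∈ M, p = q := by
    rintro α β δ M ⟨hmem, hdis⟩ p hp q hq
    by_contra hne2
    obtain ⟨d1, d2, d3, d4⟩ := hdis p hp q hq hne2
    obtain ⟨hap, hp1, hp2⟩ := hmem p hp
    obtain ⟨haq, hq1, hq2⟩ := hmem q hq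
    have np := G.ne_of_adj hap
    have nq := G.ne_of_adj haq
    have hsub : ({p.1, p.2, q.1, q.2} : Finset V) ⊆ {α, β, δ} := by
      intro z hz
      simp only [Finset.mem_insert, Finset.mem_singleton] at hz hp1 hp2 hq1 hq2 ⊢
      rcases hz with rfl | rfl | rfl | rfl
      · exact hp1
      · exact hp2
      · exact hq1
      · exact hq2
    have h4 : ({p.1, p.2, q.1, q.2} : Finset V).card = 4 := by
      rw [Finset.card_insert_of_notMem (by simp [np, d1, d2]),
        Finset.card_insert_of_notMem (by simp [d3, d4]),
        Finset.card_insert_of_notMem (by simp [nq]), Finset.card_singleton]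
    have h3 : ({α, β, δ} : Finset V).card ≤ 3 := by
      have h2 : ({β, δ} : Finset V).card ≤ 2 :=
        le_trans (Finset.card_insert_le _ _) (by simp)
      exact le_trans (Finset.card_insert_le _ _) (by omega)
    have := Finset.card_le_card hsub
    omega
  -- gamma of a path-triple α - β - δ
  have hptrip : ∀ α β δ : V, α ≠ β → α ≠ δ → β ≠ δ →
      G.Adj α β → G.Adj β δ → ¬ G.Adj α δ →
      γ {α, β, δ} = max (w α β) (w β δ) := by
    intro α β δ hab had hbd Aab Abd Nad
    have Nda : ¬ G.Adj δ α := fun h => Nad h.symm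
    obtain ⟨⟨M0, hM0, hs⟩, _⟩ := hγ {α, β, δ}
    have upper : γ {α, β, δ} ≤ max (w α β) (w β δ) := by
      rw [← hs]
      apply sum_le_of_unique _ _ _
        (le_trans (le_of_lt (hpos _ _ Aab)) (le_max_left _ _)) (htripleU α β δ M0 hM0)
      intro p hp
      obtain ⟨hadjp, hm1, hm2⟩ := hM0.1 p hp
      have hne' := G.ne_of_adj hadjp
      simp only [Finset.mem_insert, Finset.mem_singleton] at hm1 hm2
      rcases hm1 with h1 | h1 | h1 <;> rcases hm2 with h2 | h2 | h2
      · exact absurd (h1.trans h2.symm) hne'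
      · rw [h1, h2]; exact le_max_left _ _
      · rw [h1, h2] at hadjp; exact absurd hadjp Nad
      · rw [h1, h2, hsym β α]; exact le_max_left _ _
      · exact absurd (h1.trans h2.symm) hne'
      · rw [h1, h2]; exact le_max_right _ _
      · rw [h1, h2] at hadjp; exact absurd hadjp Nda
      · rw [h1, h2, hsym δ β]; exact le_max_right _ _
      · exact absurd (h1.trans h2.symm) hne'
    apply le_antisymm upper
    apply max_le
    · exact hedge_le _ _ _ Aab (by simp) (by simp)
    · exact hedge_le _ _ _ Abd (by simp) (by simp)
  -- gamma of the triangle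
  have htri : γ {v3, v4, v5} = max (w v3 v4) (max (w v3 v5) (w v4 v5)) := by
    obtain ⟨⟨M0, hM0, hs⟩, _⟩ := hγ {v3, v4, v5}
    have upper : γ {v3, v4, v5} ≤ max (w v3 v4) (max (w v3 v5) (w v4 v5)) := by
      rw [← hs]
      apply sum_le_of_unique _ _ _
        (le_trans (le_of_lt hc) (le_max_left _ _)) (htripleU v3 v4 v5 M0 hM0)
      intro p hp
      obtain ⟨hadjp, hm1, hm2⟩ := hM0.1 p hp
      have hne' := G.ne_of_adj hadjp
      simp only [Finset.mem_insert, Finset.mem_singleton] at hm1 hm2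
      rcases hm1 with h1 | h1 | h1 <;> rcases hm2 with h2 | h2 | h2
      · exact absurd (h1.trans h2.symm) hne'
      · rw [h1, h2]; exact le_max_left _ _
      · rw [h1, h2]; exact le_trans (le_max_left _ _) (le_max_right _ _)
      · rw [h1, h2, hsym v4 v3]; exact le_max_left _ _
      · exact absurd (h1.trans h2.symm) hne'
      · rw [h1, h2]; exact le_trans (le_max_right _ _) (le_max_right _ _)
      · rw [h1, h2, hsym v5 v3]; exact le_trans (le_max_left _ _) (le_max_right _ _)
      · rw [h1, h2, hsym v5 v4]; exact le_trans (le_max_right _ _) (le_max_right _ _)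
      · exact absurd (h1.trans h2.symm) hne'
    apply le_antisymm upper
    apply max_le
    · exact hedge_le _ _ _ A34 (by simp) (by simp)
    apply max_le
    · exact hedge_le _ _ _ A35 (by simp) (by simp)
    · exact hedge_le _ _ _ A45 (by simp) (by simp)
  -- two disjoint edges lower bound
  have h2edge : ∀ α β α' β' : V, G.Adj α β → G.Adj α' β' →
      α ∈ ({v1, v2, v3, v4, v5} : Finset V) → β ∈ ({v1, v2, v3, v4, v5} : Finset V) →
      α' ∈ ({v1, v2, v3, v4, v5} : Finset V) → β' ∈ ({v1, v2, v3, v4, v5} : Finset V) →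
      α ≠ α' → α ≠ β' → β ≠ α' → β ≠ β' →
      w α β + w α' β' ≤ γ {v1, v2, v3, v4, v5} := by
    intro α β α' β' hA hA' m1 m2 m3 m4 ne1 ne2 ne3 ne4
    have hm : IsMatchingIn G {v1, v2, v3, v4, v5} {(α, β), (α', β')} := by
      constructor
      · intro p hp
        simp only [Finset.mem_insert, Finset.mem_singleton] at hp
        rcases hp with rfl | rfl
        · exact ⟨hA, m1, m2⟩
        · exact ⟨hA', m3, m4⟩
      · intro p hp q hq hne
        simp only [Finset.mem_insert, Finset.mem_singleton] at hp hq
        rcases hp with rfl | rfl <;> rcases hq with rfl | rfl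
        · exact absurd rfl hne
        · exact ⟨ne1, ne2, ne3, ne4⟩
        · exact ⟨ne1.symm, ne3.symm, ne2.symm, ne4.symm⟩
        · exact absurd rfl hne
    have h' := (hγ _).2 _ hm
    have hne : (α, β) ∉ ({(α', β')} : Finset (V × V)) := by
      simp only [Finset.mem_singleton, Prod.mk.injEq, not_and]
      exact fun h => absurd h ne1
    rwa [Finset.sum_insert hne, Finset.sum_singleton] at h'
  -- upper bound for matchings on the full five vertices
  have hNup : ∀ M : Finset (V × V), IsMatchingIn G {v1, v2, v3, v4, v5} M →
      ∑ p ∈ M, w p.1 p.2 ≤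
        max (w v1 v2 + max (w v3 v4) (max (w v3 v5) (w v4 v5))) (w v2 v3 + w v4 v5) := by
    rintro M ⟨hmem, hdis⟩
    have hshare : ∀ p ∈ M, ∀ q ∈ M, ∀ z : V,
        (p.1 = z ∨ p.2 = z) → (q.1 = z ∨ q.2 = z) → p = q := by
      intro p hp q hq z hz1 hz2
      by_contra hne
      obtain ⟨d1, d2, d3, d4⟩ := hdis p hp q hq hne
      rcases hz1 with h | h <;> rcases hz2 with g | g
      · exact d1 (h.trans g.symm)
      · exact d2 (h.trans g.symm)
      · exact d3 (h.trans g.symm)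
      · exact d4 (h.trans g.symm)
    -- neighbour characterizations
    have nb1 : ∀ z, G.Adj v1 z → z ∈ ({v1, v2, v3, v4, v5} : Finset V) → z = v2 := by
      intro z hz hzm
      simp only [Finset.mem_insert, Finset.mem_singleton] at hzm
      rcases hzm with rfl | rfl | rfl | rfl | rfl
      · exact absurd hz (G.irrefl)
      · rfl
      · exact absurd hz N13
      · exact absurd hz N14
      · exact absurd hz N15
    have nb2 : ∀ z, G.Adj v2 z → z ∈ ({v1, v2, v3, v4, v5} : Finset V) →
        z = v1 ∨ z = v3 := by
      intro z hz hzm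
      simp only [Finset.mem_insert, Finset.mem_singleton] at hzm
      rcases hzm with rfl | rfl | rfl | rfl | rfl
      · exact Or.inl rfl
      · exact absurd hz (G.irrefl)
      · exact Or.inr rfl
      · exact absurd hz N24
      · exact absurd hz N25
    have nb4 : ∀ z, G.Adj v4 z → z ∈ ({v1, v2, v3, v4, v5} : Finset V) →
        z = v3 ∨ z = v5 := by
      intro z hz hzm
      simp only [Finset.mem_insert, Finset.mem_singleton] at hzm
      rcases hzm with rfl | rfl | rfl | rfl | rfl
      · exact absurd hz N41
      · exact absurd hz N42
      · exact Or.inl rfl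
      · exact absurd hz (G.irrefl)
      · exact Or.inr rfl
    have nb5 : ∀ z, G.Adj v5 z → z ∈ ({v1, v2, v3, v4, v5} : Finset V) →
        z = v3 ∨ z = v4 := by
      intro z hz hzm
      simp only [Finset.mem_insert, Finset.mem_singleton] at hzm
      rcases hzm with rfl | rfl | rfl | rfl | rfl
      · exact absurd hz N51
      · exact absurd hz N52
      · exact Or.inl rfl
      · exact Or.inr rfl
      · exact absurd hz (G.irrefl)
    classical
    set F3 : Finset (V × V) := M.filter (fun p => p.1 = v3 ∨ p.2 = v3) with hF3def
    set FR : Finset (V × V) := M.filter (fun p => ¬(p.1 = v3 ∨ p.2 = v3)) with hFRdef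
    set FA : Finset (V × V) := FR.filter (fun p => p.1 = v1 ∨ p.2 = v1) with hFAdef
    set FE : Finset (V × V) := FR.filter (fun p => ¬(p.1 = v1 ∨ p.2 = v1)) with hFEdef
    have hsplit1 : ∑ p ∈ M, w p.1 p.2 = ∑ p ∈ F3, w p.1 p.2 + ∑ p ∈ FR, w p.1 p.2 :=
      (Finset.sum_filter_add_sum_filter_not M _ _).symm
    have hsplit2 : ∑ p ∈ FR, w p.1 p.2 = ∑ p ∈ FA, w p.1 p.2 + ∑ p ∈ FE, w p.1 p.2 :=
      (Finset.sum_filter_add_sum_filter_not FR _ _).symm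
    -- characterization of FA elements: the 1-2 edge
    have hFAchar : ∀ p ∈ FA, (p.1 = v1 ∧ p.2 = v2) ∨ (p.1 = v2 ∧ p.2 = v1) := by
      intro p hp
      rw [hFAdef, Finset.mem_filter, hFRdef, Finset.mem_filter] at hp
      obtain ⟨⟨hpM, _⟩, hp1⟩ := hp
      obtain ⟨hadjp, hm1, hm2⟩ := hmem p hpM
      rcases hp1 with h | h
      · left
        refine ⟨h, ?_⟩
        have := nb1 p.2 (by rw [← h]; exact hadjp) hm2
        exact this
      · right
        refine ⟨?_, h⟩
        have := nb1 p.1 (by rw [← h]; exact hadjp.symm) hm1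
        exact this
    -- characterization of FE elements: the 4-5 edge
    have hFEchar : ∀ p ∈ FE, (p.1 = v4 ∧ p.2 = v5) ∨ (p.1 = v5 ∧ p.2 = v4) := by
      intro p hp
      rw [hFEdef, Finset.mem_filter, hFRdef, Finset.mem_filter] at hp
      obtain ⟨⟨hpM, hn3⟩, hn1⟩ := hp
      push_neg at hn3 hn1
      obtain ⟨hadjp, hm1, hm2⟩ := hmem p hpM
      simp only [Finset.mem_insert, Finset.mem_singleton] at hm1
      rcases hm1 with h | h | h | h | h
      · exact absurd h hn1.1
      · rcases nb2 p.2 (by rw [← h]; exact hadjp) hm2 with h2 | h2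
        · exact absurd h2 hn1.2
        · exact absurd h2 hn3.2
      · exact absurd h hn3.1
      · left
        refine ⟨h, ?_⟩
        rcases nb4 p.2 (by rw [← h]; exact hadjp) hm2 with h2 | h2
        · exact absurd h2 hn3.2
        · exact h2
      · right
        refine ⟨h, ?_⟩
        rcases nb5 p.2 (by rw [← h]; exact hadjp) hm2 with h2 | h2
        · exact absurd h2 hn3.2
        · exact h2
    -- FA sum bound
    have hFAsum : ∑ p ∈ FA, w p.1 p.2 ≤ w v1 v2 := by
      apply sum_le_of_unique _ _ _ ha.le
      · intro p hp q hq
        have hpM : p ∈ M := Finset.mem_of_mem_filter _ (Finset.mem_of_mem_filter _ hp)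
        have hqM : q ∈ M := Finset.mem_of_mem_filter _ (Finset.mem_of_mem_filter _ hq)
        apply hshare p hpM q hqM v1
        · rcases hFAchar p hp with ⟨h1, _⟩ | ⟨_, h2⟩
          · exact Or.inl h1
          · exact Or.inr h2
        · rcases hFAchar q hq with ⟨h1, _⟩ | ⟨_, h2⟩
          · exact Or.inl h1
          · exact Or.inr h2
      · intro p hp
        rcases hFAchar p hp with ⟨h1, h2⟩ | ⟨h1, h2⟩
        · rw [h1, h2]
        · rw [h1, h2, hsym v2 v1]
    -- FE sum bound
    have hFEsum : ∑ p ∈ FE, w p.1 p.2 ≤ w v4 v5 := by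
      apply sum_le_of_unique _ _ _ he.le
      · intro p hp q hq
        have hpM : p ∈ M := Finset.mem_of_mem_filter _ (Finset.mem_of_mem_filter _ hp)
        have hqM : q ∈ M := Finset.mem_of_mem_filter _ (Finset.mem_of_mem_filter _ hq)
        apply hshare p hpM q hqM v4
        · rcases hFEchar p hp with ⟨h1, _⟩ | ⟨_, h2⟩
          · exact Or.inl h1
          · exact Or.inr h2
        · rcases hFEchar q hq with ⟨h1, _⟩ | ⟨_, h2⟩
          · exact Or.inl h1
          · exact Or.inr h2
      · intro p hp
        rcases hFEchar p hp with ⟨h1, h2⟩ | ⟨h1, h2⟩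
        · rw [h1, h2]
        · rw [h1, h2, hsym v5 v4]
    have hBc : w v3 v4 ≤ max (w v3 v4) (max (w v3 v5) (w v4 v5)) := le_max_left _ _
    have hBd : w v3 v5 ≤ max (w v3 v4) (max (w v3 v5) (w v4 v5)) :=
      le_trans (le_max_left _ _) (le_max_right _ _)
    have hBe : w v4 v5 ≤ max (w v3 v4) (max (w v3 v5) (w v4 v5)) :=
      le_trans (le_max_right _ _) (le_max_right _ _)
    have hL : w v1 v2 + max (w v3 v4) (max (w v3 v5) (w v4 v5)) ≤
        max (w v1 v2 + max (w v3 v4) (max (w v3 v5) (w v4 v5))) (w v2 v3 + w v4 v5) :=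
      le_max_left _ _
    have hR : w v2 v3 + w v4 v5 ≤
        max (w v1 v2 + max (w v3 v4) (max (w v3 v5) (w v4 v5))) (w v2 v3 + w v4 v5) :=
      le_max_right _ _
    -- case on F3
    rcases F3.eq_empty_or_nonempty with h3e | ⟨p0, hp0⟩
    · rw [h3e, Finset.sum_empty] at hsplit1
      linarith
    · have hp0M : p0 ∈ M := Finset.mem_of_mem_filter _ hp0
      have hp0P : p0.1 = v3 ∨ p0.2 = v3 := by
        rw [hF3def, Finset.mem_filter] at hp0
        exact hp0.2
      have hF3u : ∀ p ∈ F3, ∀ q ∈ F3, p = q := by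
        intro p hp q hq
        have hpM : p ∈ M := Finset.mem_of_mem_filter _ hp
        have hqM : q ∈ M := Finset.mem_of_mem_filter _ hq
        rw [hF3def, Finset.mem_filter] at hp hq
        exact hshare p hpM q hqM v3 hp.2 hq.2
      have hF3eq : F3 = {p0} := by
        apply Finset.eq_singleton_iff_unique_mem.mpr
        exact ⟨hp0, fun q hq => hF3u q hq p0 hp0⟩
      have hF3sum : ∑ p ∈ F3, w p.1 p.2 = w p0.1 p0.2 := by
        rw [hF3eq, Finset.sum_singleton]
      obtain ⟨hadj0, hm01, hm02⟩ := hmem p0 hp0M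
      -- p0 is one of the edges at v3
      have hp0class : ((p0.1 = v2 ∧ p0.2 = v3) ∨ (p0.1 = v3 ∧ p0.2 = v2)) ∨
          ((p0.1 = v3 ∧ p0.2 = v4) ∨ (p0.1 = v4 ∧ p0.2 = v3)) ∨
          ((p0.1 = v3 ∧ p0.2 = v5) ∨ (p0.1 = v5 ∧ p0.2 = v3)) := by
        rcases hp0P with h | h
        · -- p0.1 = v3, find p0.2 among neighbours of v3
          have h2m := hm02
          simp only [Finset.mem_insert, Finset.mem_singleton] at h2m
          have hadj3 : G.Adj v3 p0.2 := by rw [← h]; exact hadj0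
          rcases h2m with g | g | g | g | g
          · exact absurd hadj3 (by rw [g]; exact N31)
          · exact Or.inl (Or.inr ⟨h, g⟩)
          · exact absurd hadj3 (by rw [g]; exact G.irrefl)
          · exact Or.inr (Or.inl (Or.inl ⟨h, g⟩))
          · exact Or.inr (Or.inr (Or.inl ⟨h, g⟩))
        · have h1m := hm01
          simp only [Finset.mem_insert, Finset.mem_singleton] at h1m
          have hadj3 : G.Adj v3 p0.1 := by rw [← h]; exact hadj0.symm
          rcases h1m with g | g | g | g | g
          · exact absurd hadj3 (by rw [g]; exact N31)
          · exact Or.inl (Or.inl ⟨g, h⟩)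
          · exact absurd hadj3 (by rw [g]; exact G.irrefl)
          · exact Or.inr (Or.inl (Or.inr ⟨g, h⟩))
          · exact Or.inr (Or.inr (Or.inr ⟨g, h⟩))
      rcases hp0class with hcl | hcl | hcl
      · -- p0 is the 2-3 edge: FA must be empty
        have hw0 : w p0.1 p0.2 = w v2 v3 := by
          rcases hcl with ⟨h1, h2⟩ | ⟨h1, h2⟩
          · rw [h1, h2]
          · rw [h1, h2, hsym v3 v2]
        have hFAe : FA = ∅ := by
          apply Finset.eq_empty_iff_forall_notMem.mpr
          intro q hq
          have hqM : q ∈ M := Finset.mem_of_mem_filter _ (Finset.mem_of_mem_filter _ hq)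
          have hpq : p0 = q := by
            apply hshare p0 hp0M q hqM v2
            · rcases hcl with ⟨h1, _⟩ | ⟨_, h2⟩
              · exact Or.inl h1
              · exact Or.inr h2
            · rcases hFAchar q hq with ⟨_, h2⟩ | ⟨h1, _⟩
              · exact Or.inr h2
              · exact Or.inl h1
          have hqF : ¬(q.1 = v3 ∨ q.2 = v3) := by
            rw [hFAdef, Finset.mem_filter, hFRdef, Finset.mem_filter] at hq
            exact hq.1.2
          rw [← hpq] at hqF
          exact hqF hp0P
        rw [hFAe, Finset.sum_empty] at hsplit2
        rw [hF3sum, hw0] at hsplit1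
        linarith
      · -- p0 is the 3-4 edge: FE must be empty
        have hw0 : w p0.1 p0.2 = w v3 v4 := by
          rcases hcl with ⟨h1, h2⟩ | ⟨h1, h2⟩
          · rw [h1, h2]
          · rw [h1, h2, hsym v4 v3]
        have hFEe : FE = ∅ := by
          apply Finset.eq_empty_iff_forall_notMem.mpr
          intro q hq
          have hqM : q ∈ M := Finset.mem_of_mem_filter _ (Finset.mem_of_mem_filter _ hq)
          have hpq : p0 = q := by
            apply hshare p0 hp0M q hqM v4
            · rcases hcl with ⟨_, h2⟩ | ⟨h1, _⟩
              · exact Or.inr h2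
              · exact Or.inl h1
            · rcases hFEchar q hq with ⟨h1, _⟩ | ⟨_, h2⟩
              · exact Or.inl h1
              · exact Or.inr h2
          have hqF : ¬(q.1 = v3 ∨ q.2 = v3) := by
            rw [hFEdef, Finset.mem_filter, hFRdef, Finset.mem_filter] at hq
            exact hq.1.2
          rw [← hpq] at hqF
          exact hqF hp0P
        rw [hFEe, Finset.sum_empty] at hsplit2
        rw [hF3sum, hw0] at hsplit1
        linarith
      · -- p0 is the 3-5 edge: FE must be empty
        have hw0 : w p0.1 p0.2 = w v3 v5 := by
          rcases hcl with ⟨h1, h2⟩ | ⟨h1, h2⟩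
          · rw [h1, h2]
          · rw [h1, h2, hsym v5 v3]
        have hFEe : FE = ∅ := by
          apply Finset.eq_empty_iff_forall_notMem.mpr
          intro q hq
          have hqM : q ∈ M := Finset.mem_of_mem_filter _ (Finset.mem_of_mem_filter _ hq)
          have hpq : p0 = q := by
            apply hshare p0 hp0M q hqM v5
            · rcases hcl with ⟨_, h2⟩ | ⟨h1, _⟩
              · exact Or.inr h2
              · exact Or.inl h1
            · rcases hFEchar q hq with ⟨_, h2⟩ | ⟨h1, _⟩
              · exact Or.inr h2
              · exact Or.inl h1
          have hqF : ¬(q.1 = v3 ∨ q.2 = v3) := by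
            rw [hFEdef, Finset.mem_filter, hFRdef, Finset.mem_filter] at hq
            exact hq.1.2
          rw [← hpq] at hqF
          exact hqF hp0P
        rw [hFEe, Finset.sum_empty] at hsplit2
        rw [hF3sum, hw0] at hsplit1
        linarith
  -- gamma of the full five-vertex set
  have hγN : γ {v1, v2, v3, v4, v5} =
      max (w v1 v2 + max (w v3 v4) (max (w v3 v5) (w v4 v5))) (w v2 v3 + w v4 v5) := by
    apply le_antisymm
    · obtain ⟨⟨M0, hM0, hs⟩, _⟩ := hγ {v1, v2, v3, v4, v5}
      rw [← hs]
      exact hNup M0 hM0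
    · apply max_le
      · have hac := h2edge v1 v2 v3 v4 A12 A34 (by simp) (by simp) (by simp) (by simp)
          h13 h14 h23 h24
        have had := h2edge v1 v2 v3 v5 A12 A35 (by simp) (by simp) (by simp) (by simp)
          h13 h15 h23 h25
        have hae := h2edge v1 v2 v4 v5 A12 A45 (by simp) (by simp) (by simp) (by simp)
          h14 h15 h24 h25
        rcases le_total (w v3 v4) (max (w v3 v5) (w v4 v5)) with h | h
        · rw [max_eq_right h]
          rcases le_total (w v3 v5) (w v4 v5) with h' | h'
          · rw [max_eq_right h']; exact hae
          · rw [max_eq_left h']; exact had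
        · rw [max_eq_left h]; exact hac
      · exact h2edge v2 v3 v4 v5 A23 A45 (by simp) (by simp) (by simp) (by simp)
          h24 h25 h34 h35
  -- sum expansion helpers
  have hsum3 : ∀ (α β δ : V), α ≠ β → α ≠ δ → β ≠ δ → ∀ g : V → ℝ,
      ∑ i ∈ ({α, β, δ} : Finset V), g i = g α + g β + g δ := by
    intro α β δ hab had hbd g
    rw [Finset.sum_insert (by simp [hab, had]), Finset.sum_pair hbd]
    ring
  have hsum5 : ∀ g : V → ℝ,
      ∑ i ∈ ({v1, v2, v3, v4, v5} : Finset V), g i =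
        g v1 + g v2 + g v3 + g v4 + g v5 := by
    intro g
    rw [Finset.sum_insert (by simp [h12, h13, h14, h15]),
      Finset.sum_insert (by simp [h23, h24, h25]),
      Finset.sum_insert (by simp [h34, h35]), Finset.sum_pair h45]
    ring
  -- efficiency equations
  have E12 : x {v1, v2} v1 + x {v1, v2} v2 = w v1 v2 := by
    have h := heff {v1, v2} ⟨v1, by simp⟩
    rwa [Finset.sum_pair h12, hpair v1 v2 A12] at h
  have E23 : x {v2, v3} v2 + x {v2, v3} v3 = w v2 v3 := by
    have h := heff {v2, v3} ⟨v2, by simp⟩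
    rwa [Finset.sum_pair h23, hpair v2 v3 A23] at h
  have E34 : x {v3, v4} v3 + x {v3, v4} v4 = w v3 v4 := by
    have h := heff {v3, v4} ⟨v3, by simp⟩
    rwa [Finset.sum_pair h34, hpair v3 v4 A34] at h
  have E35 : x {v3, v5} v3 + x {v3, v5} v5 = w v3 v5 := by
    have h := heff {v3, v5} ⟨v3, by simp⟩
    rwa [Finset.sum_pair h35, hpair v3 v5 A35] at h
  have E45 : x {v4, v5} v4 + x {v4, v5} v5 = w v4 v5 := by
    have h := heff {v4, v5} ⟨v4, by simp⟩
    rwa [Finset.sum_pair h45, hpair v4 v5 A45] at h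
  have E123 : x {v1, v2, v3} v1 + x {v1, v2, v3} v2 + x {v1, v2, v3} v3 =
      max (w v1 v2) (w v2 v3) := by
    have h := heff {v1, v2, v3} ⟨v1, by simp⟩
    rwa [hsum3 v1 v2 v3 h12 h13 h23, hptrip v1 v2 v3 h12 h13 h23 A12 A23 N13] at h
  have E234 : x {v2, v3, v4} v2 + x {v2, v3, v4} v3 + x {v2, v3, v4} v4 =
      max (w v2 v3) (w v3 v4) := by
    have h := heff {v2, v3, v4} ⟨v2, by simp⟩
    rwa [hsum3 v2 v3 v4 h23 h24 h34, hptrip v2 v3 v4 h23 h24 h34 A23 A34 N24] at h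
  have E235 : x {v2, v3, v5} v2 + x {v2, v3, v5} v3 + x {v2, v3, v5} v5 =
      max (w v2 v3) (w v3 v5) := by
    have h := heff {v2, v3, v5} ⟨v2, by simp⟩
    rwa [hsum3 v2 v3 v5 h23 h25 h35, hptrip v2 v3 v5 h23 h25 h35 A23 A35 N25] at h
  have E345 : x {v3, v4, v5} v3 + x {v3, v4, v5} v4 + x {v3, v4, v5} v5 =
      max (w v3 v4) (max (w v3 v5) (w v4 v5)) := by
    have h := heff {v3, v4, v5} ⟨v3, by simp⟩
    rwa [hsum3 v3 v4 v5 h34 h35 h45, htri] at h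
  have EN : x {v1, v2, v3, v4, v5} v1 + x {v1, v2, v3, v4, v5} v2 +
      x {v1, v2, v3, v4, v5} v3 + x {v1, v2, v3, v4, v5} v4 +
      x {v1, v2, v3, v4, v5} v5 =
      max (w v1 v2 + max (w v3 v4) (max (w v3 v5) (w v4 v5))) (w v2 v3 + w v4 v5) := by
    have h := heff {v1, v2, v3, v4, v5} ⟨v1, by simp⟩
    rwa [hsum5, hγN] at h
  -- monotonicity instances
  have subtac : ∀ {S T : Finset V}, (∀ z, z ∈ S → z ∈ T) → S ⊆ T := fun h => h
  have mp1u : x {v1, v2} v1 ≤ x {v1, v2, v3} v1 :=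
    hmono _ _ (by intro z hz; simp only [Finset.mem_insert, Finset.mem_singleton] at hz ⊢; tauto)
      v1 (by simp)
  have mp2u : x {v1, v2} v2 ≤ x {v1, v2, v3} v2 :=
    hmono _ _ (by intro z hz; simp only [Finset.mem_insert, Finset.mem_singleton] at hz ⊢; tauto)
      v2 (by simp)
  have mp1y : x {v1, v2} v1 ≤ x {v1, v2, v3, v4, v5} v1 :=
    hmono _ _ (by intro z hz; simp only [Finset.mem_insert, Finset.mem_singleton] at hz ⊢; tauto)
      v1 (by simp)
  have mp2y : x {v1, v2} v2 ≤ x {v1, v2, v3, v4, v5} v2 :=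
    hmono _ _ (by intro z hz; simp only [Finset.mem_insert, Finset.mem_singleton] at hz ⊢; tauto)
      v2 (by simp)
  have mq3u : x {v2, v3} v3 ≤ x {v1, v2, v3} v3 :=
    hmono _ _ (by intro z hz; simp only [Finset.mem_insert, Finset.mem_singleton] at hz ⊢; tauto)
      v3 (by simp)
  have mq2n : x {v2, v3} v2 ≤ x {v2, v3, v4} v2 :=
    hmono _ _ (by intro z hz; simp only [Finset.mem_insert, Finset.mem_singleton] at hz ⊢; tauto)
      v2 (by simp)
  have mq3n : x {v2, v3} v3 ≤ x {v2, v3, v4} v3 :=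
    hmono _ _ (by intro z hz; simp only [Finset.mem_insert, Finset.mem_singleton] at hz ⊢; tauto)
      v3 (by simp)
  have mq2v : x {v2, v3} v2 ≤ x {v2, v3, v5} v2 :=
    hmono _ _ (by intro z hz; simp only [Finset.mem_insert, Finset.mem_singleton] at hz ⊢; tauto)
      v2 (by simp)
  have mq3v : x {v2, v3} v3 ≤ x {v2, v3, v5} v3 :=
    hmono _ _ (by intro z hz; simp only [Finset.mem_insert, Finset.mem_singleton] at hz ⊢; tauto)
      v3 (by simp)
  have mq2y : x {v2, v3} v2 ≤ x {v1, v2, v3, v4, v5} v2 :=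
    hmono _ _ (by intro z hz; simp only [Finset.mem_insert, Finset.mem_singleton] at hz ⊢; tauto)
      v2 (by simp)
  have mq3y : x {v2, v3} v3 ≤ x {v1, v2, v3, v4, v5} v3 :=
    hmono _ _ (by intro z hz; simp only [Finset.mem_insert, Finset.mem_singleton] at hz ⊢; tauto)
      v3 (by simp)
  have mm3n : x {v3, v4} v3 ≤ x {v2, v3, v4} v3 :=
    hmono _ _ (by intro z hz; simp only [Finset.mem_insert, Finset.mem_singleton] at hz ⊢; tauto)
      v3 (by simp)
  have mm4n : x {v3, v4} v4 ≤ x {v2, v3, v4} v4 :=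
    hmono _ _ (by intro z hz; simp only [Finset.mem_insert, Finset.mem_singleton] at hz ⊢; tauto)
      v4 (by simp)
  have mm3t : x {v3, v4} v3 ≤ x {v3, v4, v5} v3 :=
    hmono _ _ (by intro z hz; simp only [Finset.mem_insert, Finset.mem_singleton] at hz ⊢; tauto)
      v3 (by simp)
  have mr3v : x {v3, v5} v3 ≤ x {v2, v3, v5} v3 :=
    hmono _ _ (by intro z hz; simp only [Finset.mem_insert, Finset.mem_singleton] at hz ⊢; tauto)
      v3 (by simp)
  have mr5v : x {v3, v5} v5 ≤ x {v2, v3, v5} v5 :=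
    hmono _ _ (by intro z hz; simp only [Finset.mem_insert, Finset.mem_singleton] at hz ⊢; tauto)
      v5 (by simp)
  have mr3t : x {v3, v5} v3 ≤ x {v3, v4, v5} v3 :=
    hmono _ _ (by intro z hz; simp only [Finset.mem_insert, Finset.mem_singleton] at hz ⊢; tauto)
      v3 (by simp)
  have ms4t : x {v4, v5} v4 ≤ x {v3, v4, v5} v4 :=
    hmono _ _ (by intro z hz; simp only [Finset.mem_insert, Finset.mem_singleton] at hz ⊢; tauto)
      v4 (by simp)
  have ms5t : x {v4, v5} v5 ≤ x {v3, v4, v5} v5 :=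
    hmono _ _ (by intro z hz; simp only [Finset.mem_insert, Finset.mem_singleton] at hz ⊢; tauto)
      v5 (by simp)
  have ms4y : x {v4, v5} v4 ≤ x {v1, v2, v3, v4, v5} v4 :=
    hmono _ _ (by intro z hz; simp only [Finset.mem_insert, Finset.mem_singleton] at hz ⊢; tauto)
      v4 (by simp)
  have ms5y : x {v4, v5} v5 ≤ x {v1, v2, v3, v4, v5} v5 :=
    hmono _ _ (by intro z hz; simp only [Finset.mem_insert, Finset.mem_singleton] at hz ⊢; tauto)
      v5 (by simp)
  have mu1y : x {v1, v2, v3} v1 ≤ x {v1, v2, v3, v4, v5} v1 :=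
    hmono _ _ (by intro z hz; simp only [Finset.mem_insert, Finset.mem_singleton] at hz ⊢; tauto)
      v1 (by simp)
  have mu2y : x {v1, v2, v3} v2 ≤ x {v1, v2, v3, v4, v5} v2 :=
    hmono _ _ (by intro z hz; simp only [Finset.mem_insert, Finset.mem_singleton] at hz ⊢; tauto)
      v2 (by simp)
  have mv3y : x {v2, v3, v5} v3 ≤ x {v1, v2, v3, v4, v5} v3 :=
    hmono _ _ (by intro z hz; simp only [Finset.mem_insert, Finset.mem_singleton] at hz ⊢; tauto)
      v3 (by simp)
  have mt3y : x {v3, v4, v5} v3 ≤ x {v1, v2, v3, v4, v5} v3 :=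
    hmono _ _ (by intro z hz; simp only [Finset.mem_insert, Finset.mem_singleton] at hz ⊢; tauto)
      v3 (by simp)
  have mt4y : x {v3, v4, v5} v4 ≤ x {v1, v2, v3, v4, v5} v4 :=
    hmono _ _ (by intro z hz; simp only [Finset.mem_insert, Finset.mem_singleton] at hz ⊢; tauto)
      v4 (by simp)
  have mt5y : x {v3, v4, v5} v5 ≤ x {v1, v2, v3, v4, v5} v5 :=
    hmono _ _ (by intro z hz; simp only [Finset.mem_insert, Finset.mem_singleton] at hz ⊢; tauto)
      v5 (by simp)
  -- nonnegativity instances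
  have nny1 : 0 ≤ x {v1, v2, v3, v4, v5} v1 := nn _ v1 (by simp)
  have nnp1 : 0 ≤ x {v1, v2} v1 := nn _ v1 (by simp)
  have nnr5 : 0 ≤ x {v3, v5} v5 := nn _ v5 (by simp)
  have nnm4 : 0 ≤ x {v3, v4} v4 := nn _ v4 (by simp)
  -- the main case analysis
  rcases le_or_gt (w v2 v3 + w v4 v5)
      (w v1 v2 + max (w v3 v4) (max (w v3 v5) (w v4 v5))) with hcase | hcase
  · -- Case I : γ(N) = a + B
    have hΓ : max (w v1 v2 + max (w v3 v4) (max (w v3 v5) (w v4 v5)))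
        (w v2 v3 + w v4 v5) = w v1 v2 + max (w v3 v4) (max (w v3 v5) (w v4 v5)) :=
      max_eq_left hcase
    have hy12 : x {v1, v2, v3, v4, v5} v1 + x {v1, v2, v3, v4, v5} v2 = w v1 v2 := by
      linarith
    have hy345 : x {v1, v2, v3, v4, v5} v3 + x {v1, v2, v3, v4, v5} v4 +
        x {v1, v2, v3, v4, v5} v5 = max (w v3 v4) (max (w v3 v5) (w v4 v5)) := by
      linarith
    have hu12 : x {v1, v2, v3} v1 + x {v1, v2, v3} v2 = w v1 v2 := by
      linarith
    have habmax : max (w v1 v2) (w v2 v3) < w v1 v2 + w v2 v3 := by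
      rcases le_total (w v1 v2) (w v2 v3) with h | h
      · rw [max_eq_right h]; linarith
      · rw [max_eq_left h]; linarith
    have hq2pos : 0 < x {v2, v3} v2 := by
      linarith
    rcases le_total (w v3 v4) (max (w v3 v5) (w v4 v5)) with hB1 | hB1
    · rcases le_total (w v3 v5) (w v4 v5) with hB2 | hB2
      · -- B = e
        have hBe : max (w v3 v4) (max (w v3 v5) (w v4 v5)) = w v4 v5 := by
          rw [max_eq_right hB1, max_eq_right hB2]
        have hbdmax : max (w v2 v3) (w v3 v5) < w v2 v3 + w v3 v5 := by
          rcases le_total (w v2 v3) (w v3 v5) with h | h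
          · rw [max_eq_right h]; linarith
          · rw [max_eq_left h]; linarith
        linarith
      · -- B = d
        have hBd : max (w v3 v4) (max (w v3 v5) (w v4 v5)) = w v3 v5 := by
          rw [max_eq_right hB1, max_eq_left hB2]
        rcases le_total (w v2 v3) (w v3 v5) with h | h
        · have hbd : max (w v2 v3) (w v3 v5) = w v3 v5 := max_eq_right h
          linarith
        · have hbd : max (w v2 v3) (w v3 v5) = w v2 v3 := max_eq_left h
          linarith
    · -- B = c
      have hBc : max (w v3 v4) (max (w v3 v5) (w v4 v5)) = w v3 v4 := max_eq_left hB1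
      rcases le_total (w v2 v3) (w v3 v4) with h | h
      · have hbc : max (w v2 v3) (w v3 v4) = w v3 v4 := max_eq_right h
        linarith
      · have hbc : max (w v2 v3) (w v3 v4) = w v2 v3 := max_eq_left h
        linarith
  · -- Case II : γ(N) = b + e
    have hΓ : max (w v1 v2 + max (w v3 v4) (max (w v3 v5) (w v4 v5)))
        (w v2 v3 + w v4 v5) = w v2 v3 + w v4 v5 :=
      max_eq_right hcase.le
    have hBe : w v4 v5 ≤ max (w v3 v4) (max (w v3 v5) (w v4 v5)) :=
      le_trans (le_max_right _ _) (le_max_right _ _)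
    have hy1 : x {v1, v2, v3, v4, v5} v1 = 0 := by
      linarith
    have hy23 : x {v1, v2, v3, v4, v5} v2 + x {v1, v2, v3, v4, v5} v3 = w v2 v3 := by
      linarith
    have hy45 : x {v1, v2, v3, v4, v5} v4 + x {v1, v2, v3, v4, v5} v5 = w v4 v5 := by
      linarith
    have hp2 : x {v1, v2} v2 = w v1 v2 := by
      linarith
    have hy2a : w v1 v2 ≤ x {v1, v2, v3, v4, v5} v2 := by
      linarith
    have hy3 : x {v1, v2, v3, v4, v5} v3 ≤ w v2 v3 - w v1 v2 := by
      linarith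
    have htt : x {v3, v4, v5} v4 + x {v3, v4, v5} v5 = w v4 v5 := by
      linarith
    have ht3 : x {v3, v4, v5} v3 =
        max (w v3 v4) (max (w v3 v5) (w v4 v5)) - w v4 v5 := by
      linarith
    rcases le_total (w v3 v5) (w v2 v3) with h | h
    · have hbd : max (w v2 v3) (w v3 v5) = w v2 v3 := max_eq_left h
      -- v5 ≤ 0 in {2,3,5}, so r5 = 0 and t3 ≥ d
      have hr3 : w v3 v5 ≤ x {v3, v5} v3 := by
        linarith
      rcases le_total (w v3 v4) (w v2 v3) with h2 | h2
      · have hbc : max (w v2 v3) (w v3 v4) = w v2 v3 := max_eq_left h2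
        have hm3 : w v3 v4 ≤ x {v3, v4} v3 := by
          linarith
        -- t3 ≥ c and t3 ≥ d, t3 = B - e
        rcases le_total (w v3 v4) (max (w v3 v5) (w v4 v5)) with hB1 | hB1
        · rcases le_total (w v3 v5) (w v4 v5) with hB2 | hB2
          · have hB : max (w v3 v4) (max (w v3 v5) (w v4 v5)) = w v4 v5 := by
              rw [max_eq_right hB1, max_eq_right hB2]
            linarith
          · have hB : max (w v3 v4) (max (w v3 v5) (w v4 v5)) = w v3 v5 := by
              rw [max_eq_right hB1, max_eq_left hB2]
            linarith
        · have hB : max (w v3 v4) (max (w v3 v5) (w v4 v5)) = w v3 v4 :=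
            max_eq_left hB1
          linarith
      · have hbc : max (w v2 v3) (w v3 v4) = w v3 v4 := max_eq_right h2
        -- n2 ≤ 0, so q2 ≤ 0, q3 = b ≤ y3 ≤ b - a
        linarith
    · have hbd : max (w v2 v3) (w v3 v5) = w v3 v5 := max_eq_right h
      -- v2 ≤ 0, q2 ≤ 0, q3 = b ≤ y3 ≤ b - a
      linarith
end
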